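/- arXiv:2502.17724 — 7 statements merged into one kernel-verified Lean document; each statement's English description precedes it below -/
import Mathlib

section
/- For a finite graph G with no isolated vertices, the average 1-level friendship bias admits the symmetrized representation (1/n)∑_i Δ_i = (1/(2n)) ∑_{(i,j): {i,j}∈E(G)} ( √(d_j/d_i) − √(d_i/d_j) )², where the sum runs over all ordered pairs of adjacent vertices, divided appropriately; in particular equality to zero holds if and only if d_i = d_j for every edge {i,j}. -/
open Finset

theorem stmt_1 (n : ℕ) (hn : 1 ≤ n) (G : SimpleGraph (Fin n)) [DecidableRel G.Adj]
    (hdeg : ∀ i, 1 ≤ G.degree i) :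
    ((1 / (n : ℝ)) *
        ∑ i, ((∑ j, ((G.adjMatrix ℝ) i j / (G.degree i : ℝ)) * (G.degree j : ℝ))
          - (G.degree i : ℝ))
      = (1 / (2 * (n : ℝ))) *
          ∑ i, ∑ j, (if G.Adj i j then
            (Real.sqrt ((G.degree j : ℝ) / (G.degree i : ℝ))
              - Real.sqrt ((G.degree i : ℝ) / (G.degree j : ℝ)))^2 else 0))
    ∧ ((1 / (n : ℝ)) *
        ∑ i, ((∑ j, ((G.adjMatrix ℝ) i j / (G.degree i : ℝ)) * (G.degree j : ℝ))
          - (G.degree i : ℝ)) = 0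
        ↔ ∀ i j, G.Adj i j → G.degree i = G.degree j) := by
  have hd : ∀ i, (0:ℝ) < (G.degree i : ℝ) := fun i => by
    have := hdeg i; positivity
  have hdsum : ∀ i, ((G.degree i : ℝ)) = ∑ j, if G.Adj i j then (1:ℝ) else 0 := by
    intro i
    simp [SimpleGraph.degree, SimpleGraph.neighborFinset_eq_filter, Finset.sum_boole]
  have hT : ∀ i, ((∑ j, ((G.adjMatrix ℝ) i j / (G.degree i : ℝ)) * (G.degree j : ℝ))
          - (G.degree i : ℝ))
      = ∑ j, (if G.Adj i j then ((G.degree j : ℝ) / (G.degree i : ℝ) - 1) else 0) := by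
    intro i
    rw [hdsum i, ← Finset.sum_sub_distrib]
    refine Finset.sum_congr rfl fun j _ => ?_
    by_cases h : G.Adj i j <;> simp [h, SimpleGraph.adjMatrix_apply, div_eq_mul_inv, mul_comm]
  -- pointwise square expansion
  have hsq : ∀ i j, G.Adj i j →
      (Real.sqrt ((G.degree j : ℝ) / (G.degree i : ℝ))
        - Real.sqrt ((G.degree i : ℝ) / (G.degree j : ℝ)))^2
      = ((G.degree j : ℝ) / (G.degree i : ℝ) - 1) + ((G.degree i : ℝ) / (G.degree j : ℝ) - 1) := by
    intro i j _
    have h1 : (0:ℝ) ≤ (G.degree j : ℝ) / (G.degree i : ℝ) := le_of_lt (div_pos (hd j) (hd i))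
    have h2 : (0:ℝ) ≤ (G.degree i : ℝ) / (G.degree j : ℝ) := le_of_lt (div_pos (hd i) (hd j))
    have hmul : Real.sqrt ((G.degree j : ℝ) / (G.degree i : ℝ)) *
        Real.sqrt ((G.degree i : ℝ) / (G.degree j : ℝ)) = 1 := by
      rw [← Real.sqrt_mul h1]
      have : (G.degree j : ℝ) / (G.degree i : ℝ) * ((G.degree i : ℝ) / (G.degree j : ℝ)) = 1 := by
        rw [div_mul_div_comm, mul_comm]
        exact div_self (mul_ne_zero (hd i).ne' (hd j).ne')
      rw [this, Real.sqrt_one]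
    rw [sub_sq, Real.sq_sqrt h1, Real.sq_sqrt h2, mul_assoc, hmul]
    ring
  -- the symmetrized sum equals 2T
  have hS : (∑ i, ∑ j, (if G.Adj i j then
            (Real.sqrt ((G.degree j : ℝ) / (G.degree i : ℝ))
              - Real.sqrt ((G.degree i : ℝ) / (G.degree j : ℝ)))^2 else 0))
      = 2 * ∑ i, ((∑ j, ((G.adjMatrix ℝ) i j / (G.degree i : ℝ)) * (G.degree j : ℝ))
          - (G.degree i : ℝ)) := by
    have step1 : (∑ i, ∑ j, (if G.Adj i j then
            (Real.sqrt ((G.degree j : ℝ) / (G.degree i : ℝ))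
              - Real.sqrt ((G.degree i : ℝ) / (G.degree j : ℝ)))^2 else 0))
        = (∑ i, ∑ j, (if G.Adj i j then ((G.degree j : ℝ) / (G.degree i : ℝ) - 1) else 0))
          + (∑ i, ∑ j, (if G.Adj i j then ((G.degree i : ℝ) / (G.degree j : ℝ) - 1) else 0)) := by
      rw [← Finset.sum_add_distrib]
      refine Finset.sum_congr rfl fun i _ => ?_
      rw [← Finset.sum_add_distrib]
      refine Finset.sum_congr rfl fun j _ => ?_
      by_cases h : G.Adj i j
      · rw [if_pos h, if_pos h, if_pos h, hsq i j h]
      · simp [h]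
    have step2 : (∑ i, ∑ j, (if G.Adj i j then ((G.degree i : ℝ) / (G.degree j : ℝ) - 1) else 0))
        = (∑ i, ∑ j, (if G.Adj i j then ((G.degree j : ℝ) / (G.degree i : ℝ) - 1) else 0)) := by
      rw [Finset.sum_comm]
      refine Finset.sum_congr rfl fun i _ => Finset.sum_congr rfl fun j _ => ?_
      by_cases h : G.Adj i j
      · simp [h, h.symm]
      · have h' : ¬ G.Adj j i := fun hc => h hc.symm
        simp [h, h']
    rw [step1, step2, two_mul]
    congr 1 <;> exact (Finset.sum_congr rfl fun i _ => (hT i)).symm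
  have hn0 : (n:ℝ) ≠ 0 := by positivity
  constructor
  · rw [hS]
    field_simp
  · rw [div_mul_eq_mul_div, one_mul, div_eq_zero_iff]
    have hiff : (∑ i, ((∑ j, ((G.adjMatrix ℝ) i j / (G.degree i : ℝ)) * (G.degree j : ℝ))
          - (G.degree i : ℝ))) = 0 ↔ ∀ i j, G.Adj i j → G.degree i = G.degree j := by
      have h2 : (∑ i, ((∑ j, ((G.adjMatrix ℝ) i j / (G.degree i : ℝ)) * (G.degree j : ℝ))
          - (G.degree i : ℝ))) = 0 ↔ (∑ i, ∑ j, (if G.Adj i j then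
            (Real.sqrt ((G.degree j : ℝ) / (G.degree i : ℝ))
              - Real.sqrt ((G.degree i : ℝ) / (G.degree j : ℝ)))^2 else 0)) = 0 := by
        rw [hS]; constructor <;> intro h <;> linarith
      rw [h2]
      have hnn : ∀ i ∈ (univ : Finset (Fin n)), 0 ≤ ∑ j, (if G.Adj i j then
            (Real.sqrt ((G.degree j : ℝ) / (G.degree i : ℝ))
              - Real.sqrt ((G.degree i : ℝ) / (G.degree j : ℝ)))^2 else 0) := by
        intro i _
        refine Finset.sum_nonneg fun j _ => ?_
        by_cases h : G.Adj i j <;> simp [h] <;> positivity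
      rw [Finset.sum_eq_zero_iff_of_nonneg hnn]
      constructor
      · intro h i j hij
        have hi := h i (mem_univ i)
        have hnn2 : ∀ j ∈ (univ : Finset (Fin n)), (0:ℝ) ≤ (if G.Adj i j then
            (Real.sqrt ((G.degree j : ℝ) / (G.degree i : ℝ))
              - Real.sqrt ((G.degree i : ℝ) / (G.degree j : ℝ)))^2 else 0) := by
          intro j _
          by_cases h : G.Adj i j <;> simp [h] <;> positivity
        rw [Finset.sum_eq_zero_iff_of_nonneg hnn2] at hi
        have := hi j (mem_univ j)
        rw [if_pos hij] at this
        have heq : Real.sqrt ((G.degree j : ℝ) / (G.degree i : ℝ))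
            = Real.sqrt ((G.degree i : ℝ) / (G.degree j : ℝ)) := by
          have := pow_eq_zero_iff (n := 2) (by norm_num) |>.mp this
          linarith [sub_eq_zero.mp this]
        have hdiv : (G.degree j : ℝ) / (G.degree i : ℝ) = (G.degree i : ℝ) / (G.degree j : ℝ) := by
          have h1 : (0:ℝ) ≤ (G.degree j : ℝ) / (G.degree i : ℝ) := le_of_lt (div_pos (hd j) (hd i))
          have h2 : (0:ℝ) ≤ (G.degree i : ℝ) / (G.degree j : ℝ) := le_of_lt (div_pos (hd i) (hd j))
          exact (Real.sqrt_inj h1 h2).mp heq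
        have hi' := (hd i).ne'
        have hj' := (hd j).ne'
        have : (G.degree j : ℝ) * (G.degree j : ℝ) = (G.degree i : ℝ) * (G.degree i : ℝ) := by
          field_simp at hdiv
          linarith
        have : (G.degree i : ℝ) = (G.degree j : ℝ) := by nlinarith [hd i, hd j]
        exact_mod_cast this
      · intro h i _
        refine Finset.sum_eq_zero fun j _ => ?_
        by_cases hij : G.Adj i j
        · have := h i j hij
          rw [if_pos hij, this]
          simp [div_self (hd j).ne']
        · simp [hij]
    rw [hiff]
    constructor
    · rintro (h | h)
      · exact h
      · exact absurd h hn0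
    · exact Or.inl
end

section
/- For a finite graph G with all degrees at least 1, and the simple random walk transition matrix P(i,j) = A_{ij}/d_i, for every k ∈ ℕ the average k-level friendship bias (1/n) ∑_i ( ∑_j P^k(i,j) d_j − d_i ) is nonnegative. -/
theorem stmt_2 (n : ℕ) (G : SimpleGraph (Fin n)) [DecidableRel G.Adj]
    (hdeg : ∀ i, 1 ≤ G.degree i) (k : ℕ)
    (P : Matrix (Fin n) (Fin n) ℝ)
    (hP : ∀ i j, P i j = (G.adjMatrix ℝ) i j / (G.degree i : ℝ)) :
    0 ≤ (1 / (n : ℝ)) *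
        ∑ i, ((∑ j, (P ^ k) i j * (G.degree j : ℝ)) - (G.degree i : ℝ)) := by
  have hd : ∀ i, (0:ℝ) < (G.degree i : ℝ) := fun i => by
    exact_mod_cast Nat.lt_of_lt_of_le Nat.zero_lt_one (hdeg i)
  -- adjacency row sums
  have hAsum : ∀ i, ∑ j, (G.adjMatrix ℝ) i j = (G.degree i : ℝ) := fun i => by
    simp [SimpleGraph.adjMatrix_apply, SimpleGraph.degree, SimpleGraph.neighborFinset,
      Finset.sum_ite_eq, Finset.sum_boole]
  -- row sums of P are 1
  have hProw : ∀ i, ∑ j, P i j = 1 := fun i => by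
    simp only [hP]
    rw [← Finset.sum_div, hAsum, div_self (hd i).ne']
  -- row sums of P^m are 1
  have hrow : ∀ m i, ∑ j, (P ^ m) i j = 1 := by
    intro m
    induction m with
    | zero => intro i; rw [pow_zero]; simp [Matrix.one_apply]
    | succ m ih =>
      intro i
      rw [pow_succ]
      simp only [Matrix.mul_apply]
      rw [Finset.sum_comm]
      have hx : ∀ x : Fin n, ∑ j, (P ^ m) i x * P x j = (P ^ m) i x := fun x => by
        rw [← Finset.mul_sum, hProw x, mul_one]
      rw [Finset.sum_congr rfl fun x _ => hx x]
      exact ih i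
  -- nonnegativity of entries of P^m
  have hPnn : ∀ i j, 0 ≤ P i j := fun i j => by
    rw [hP]
    exact div_nonneg (by simp [SimpleGraph.adjMatrix_apply]; positivity) (hd i).le
  have hnn : ∀ m i j, 0 ≤ (P ^ m) i j := by
    intro m
    induction m with
    | zero => intro i j; rw [pow_zero, Matrix.one_apply]; positivity
    | succ m ih =>
      intro i j
      rw [pow_succ, Matrix.mul_apply]
      exact Finset.sum_nonneg fun x _ => mul_nonneg (ih i x) (hPnn x j)
  -- reversibility: d_i (P^m) i j = d_j (P^m) j i
  have hrev : ∀ m i j, (G.degree i : ℝ) * (P ^ m) i j = (G.degree j : ℝ) * (P ^ m) j i := by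
    intro m
    induction m with
    | zero =>
      intro i j
      by_cases h : i = j
      · subst h; rfl
      · simp [Matrix.one_apply, h, Ne.symm h]
    | succ m ih =>
      intro i j
      have h1 : (P ^ (m+1)) i j = ∑ x, P i x * (P ^ m) x j := by
        rw [pow_succ']; simp [Matrix.mul_apply]
      have h2 : (P ^ (m+1)) j i = ∑ x, (P ^ m) j x * P x i := by
        rw [pow_succ]; simp [Matrix.mul_apply]
      rw [h1, h2, Finset.mul_sum, Finset.mul_sum]
      refine Finset.sum_congr rfl fun x _ => ?_
      have hsymA : (G.adjMatrix ℝ) i x = (G.adjMatrix ℝ) x i := by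
        rw [SimpleGraph.adjMatrix_apply, SimpleGraph.adjMatrix_apply]
        exact if_congr (G.adj_comm i x) rfl rfl
      have hA : (G.degree i : ℝ) * P i x = (G.adjMatrix ℝ) i x := by
        rw [hP, mul_comm, div_mul_cancel₀ _ (hd i).ne']
      have hA' : (G.degree x : ℝ) * P x i = (G.adjMatrix ℝ) x i := by
        rw [hP, mul_comm, div_mul_cancel₀ _ (hd x).ne']
      have hx : (P ^ m) x j = (G.degree j : ℝ) * (P ^ m) j x / (G.degree x : ℝ) := by
        rw [← ih x j, mul_div_cancel_left₀ _ (hd x).ne']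
      calc (G.degree i : ℝ) * (P i x * (P ^ m) x j)
          = (G.adjMatrix ℝ) i x * (P ^ m) x j := by rw [← hA]; ring
        _ = (G.adjMatrix ℝ) x i * ((G.degree j : ℝ) * (P ^ m) j x / (G.degree x : ℝ)) := by
            rw [hx, hsymA]
        _ = (G.degree j : ℝ) * ((P ^ m) j x * ((G.degree x : ℝ) * P x i / (G.degree x : ℝ))) := by
            rw [← hA']; ring
        _ = (G.degree j : ℝ) * ((P ^ m) j x * P x i) := by
            rw [mul_div_cancel_left₀ _ (hd x).ne']
  -- rewrite summand
  set f : Fin n → Fin n → ℝ := fun i j => (P ^ k) i j * ((G.degree j : ℝ) - (G.degree i : ℝ))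
    with hf
  have hS : ∑ i, ((∑ j, (P ^ k) i j * (G.degree j : ℝ)) - (G.degree i : ℝ))
      = ∑ i, ∑ j, f i j := by
    refine Finset.sum_congr rfl fun i _ => ?_
    have : (G.degree i : ℝ) = ∑ j, (P ^ k) i j * (G.degree i : ℝ) := by
      rw [← Finset.sum_mul, hrow k i, one_mul]
    rw [this, ← Finset.sum_sub_distrib]
    exact Finset.sum_congr rfl fun j _ => by rw [hf]; ring
  rw [hS]
  have hpair : ∀ i j, 0 ≤ f i j + f j i := by
    intro i j
    have key : (G.degree i : ℝ) * (f i j + f j i)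
        = ((G.degree j : ℝ) - (G.degree i : ℝ))^2 * (P ^ k) j i := by
      simp only [hf]
      have := hrev k i j
      nlinarith [hrev k i j]
    have h2 : 0 ≤ (G.degree i : ℝ) * (f i j + f j i) := by
      rw [key]; exact mul_nonneg (sq_nonneg _) (hnn k j i)
    nlinarith [hd i]
  have h2S : 0 ≤ (2:ℝ) * ∑ i, ∑ j, f i j := by
    have : (2:ℝ) * ∑ i, ∑ j, f i j = ∑ i, ∑ j, (f i j + f j i) := by
      rw [two_mul]
      nth_rewrite 2 [Finset.sum_comm]
      rw [← Finset.sum_add_distrib]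
      exact Finset.sum_congr rfl fun i _ => by rw [← Finset.sum_add_distrib]
    rw [this]
    exact Finset.sum_nonneg fun i _ => Finset.sum_nonneg fun j _ => hpair i j
  have : 0 ≤ ∑ i, ∑ j, f i j := by linarith
  positivity
end

section
/- For a finite graph G with all degrees at least 1 and backtracking (simple) random walk, the average k-level friendship bias equals (1/(2n)) ∑_{(i_0,…,i_k)∈V_k} ( √(d_{i_k}/d_{i_0}) − √(d_{i_0}/d_{i_k}) )² · ∏_{l=1}^{k−1} (1/d_{i_l}), where V_k is the set of walks of length k in G. In particular it is zero if and only if the endpoints of every walk of length k have equal degree. -/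
open Finset

namespace Stmt3Aux

variable {n : ℕ} (G : SimpleGraph (Fin n)) [DecidableRel G.Adj]

lemma sum_adj_row (i : Fin n) : ∑ a, (G.adjMatrix ℝ) i a = (G.degree i : ℝ) := by
  classical
  have : ∑ a, (G.adjMatrix ℝ) i a = ∑ a ∈ G.neighborFinset i, (1:ℝ) := by
    rw [SimpleGraph.neighborFinset_eq_filter, Finset.sum_filter]
    simp [SimpleGraph.adjMatrix_apply]
  rw [this, Finset.sum_const, SimpleGraph.degree]
  simp

end Stmt3Aux

namespace Stmt3Aux

variable {n : ℕ} {G : SimpleGraph (Fin n)} [DecidableRel G.Adj]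

lemma rowsum (hdeg : ∀ i, 1 ≤ G.degree i) {P : Matrix (Fin n) (Fin n) ℝ}
    (hP : ∀ i j, P i j = (G.adjMatrix ℝ) i j / (G.degree i : ℝ)) (k : ℕ) (i : Fin n) :
    ∑ j, (P ^ k) i j = 1 := by
  induction k generalizing i with
  | zero => simp [Matrix.one_apply]
  | succ k ih =>
    simp only [pow_succ', Matrix.mul_apply]
    rw [Finset.sum_comm]
    have : ∀ a : Fin n, ∑ j, P i a * (P ^ k) a j = P i a := by
      intro a; rw [← Finset.mul_sum, ih a, mul_one]
    rw [Finset.sum_congr rfl fun a _ => this a]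
    have hd : (0:ℝ) < (G.degree i : ℝ) := by exact_mod_cast Nat.lt_of_lt_of_le Nat.zero_lt_one (hdeg i)
    calc ∑ a, P i a = (∑ a, (G.adjMatrix ℝ) i a) / (G.degree i : ℝ) := by
          rw [Finset.sum_div]; exact Finset.sum_congr rfl fun a _ => hP i a
      _ = 1 := by rw [sum_adj_row]; field_simp

lemma walk_pow (hdeg : ∀ i, 1 ≤ G.degree i) {P : Matrix (Fin n) (Fin n) ℝ}
    (hP : ∀ i j, P i j = (G.adjMatrix ℝ) i j / (G.degree i : ℝ)) (k : ℕ) (i j : Fin n) :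
    (P ^ k) i j = ∑ w : Fin (k+1) → Fin n,
      if w 0 = i ∧ w (Fin.last k) = j ∧ (∀ l : Fin k, G.Adj (w l.castSucc) (w l.succ))
      then ∏ l : Fin k, (1 / (G.degree (w l.castSucc) : ℝ)) else 0 := by
  induction k generalizing i j with
  | zero =>
    rw [pow_zero, Matrix.one_apply]
    rw [← Equiv.sum_comp (Equiv.funUnique (Fin 1) (Fin n)).symm]
    simp only [Equiv.funUnique_symm_apply, Fin.last]
    by_cases h : i = j
    · subst h; simp
    · rw [if_neg h]
      symm; apply Finset.sum_eq_zero; intro a _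
      rw [if_neg]; rintro ⟨rfl, rfl, -⟩; exact h rfl
  | succ k ih =>
    have hdpos : ∀ a : Fin n, (0:ℝ) < (G.degree a : ℝ) := fun a => by
      exact_mod_cast Nat.lt_of_lt_of_le Nat.zero_lt_one (hdeg a)
    have econs : ∀ (F : (Fin (k+1+1) → Fin n) → ℝ),
        ∑ w, F w = ∑ a : Fin n, ∑ w : Fin (k+1) → Fin n, F (Fin.cons a w) := by
      intro F
      rw [← Equiv.sum_comp (Fin.consEquiv fun _ => Fin n) F, Fintype.sum_prod_type]
      rfl
    rw [pow_succ', Matrix.mul_apply, econs]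
    have hcons : ∀ (a : Fin n) (w : Fin (k+1) → Fin n),
        (if (Fin.cons (α := fun _ => Fin n) a w) 0 = i ∧ (Fin.cons (α := fun _ => Fin n) a w) (Fin.last (k+1)) = j ∧
            (∀ l : Fin (k+1), G.Adj ((Fin.cons (α := fun _ => Fin n) a w) l.castSucc) ((Fin.cons (α := fun _ => Fin n) a w) l.succ))
         then ∏ l : Fin (k+1), (1 / (G.degree ((Fin.cons (α := fun _ => Fin n) a w) l.castSucc) : ℝ)) else 0)
        = if a = i then (if G.Adj a (w 0) ∧ w (Fin.last k) = j ∧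
              (∀ m : Fin k, G.Adj (w m.castSucc) (w m.succ))
            then (1 / (G.degree a : ℝ)) * ∏ m : Fin k, (1 / (G.degree (w m.castSucc) : ℝ))
            else 0) else 0 := by
      intro a w
      have hlast : (Fin.cons (α := fun _ => Fin n) a w) (Fin.last (k+1)) = w (Fin.last k) := by
        rw [← Fin.succ_last, Fin.cons_succ]
      have hadj : (∀ l : Fin (k+1), G.Adj ((Fin.cons (α := fun _ => Fin n) a w) l.castSucc) ((Fin.cons (α := fun _ => Fin n) a w) l.succ)) ↔
          (G.Adj a (w 0) ∧ ∀ m : Fin k, G.Adj (w m.castSucc) (w m.succ)) := by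
        constructor
        · intro h
          refine ⟨by simpa using h 0, fun m => ?_⟩
          simpa [← Fin.succ_castSucc] using h m.succ
        · rintro ⟨h0, h⟩ l
          refine Fin.cases ?_ ?_ l
          · simpa using h0
          · intro m; simpa [← Fin.succ_castSucc] using h m
      have hprod : ∏ l : Fin (k+1), (1 / (G.degree ((Fin.cons (α := fun _ => Fin n) a w) l.castSucc) : ℝ))
          = (1 / (G.degree a : ℝ)) * ∏ m : Fin k, (1 / (G.degree (w m.castSucc) : ℝ)) := by
        rw [Fin.prod_univ_succ, Fin.castSucc_zero, Fin.cons_zero]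
        congr 1
      rw [Fin.cons_zero, hlast, hprod]
      simp only [hadj]
      by_cases h1 : a = i <;> by_cases h2 : G.Adj a (w 0) <;>
        by_cases h3 : w (Fin.last k) = j <;>
        by_cases h4 : ∀ m : Fin k, G.Adj (w m.castSucc) (w m.succ) <;>
        simp [h1, h2, h3, h4]
    calc ∑ a, P i a * (P ^ k) a j
        = ∑ a, ∑ w : Fin (k+1) → Fin n,
            (if w 0 = a ∧ w (Fin.last k) = j ∧ (∀ m : Fin k, G.Adj (w m.castSucc) (w m.succ))
             then P i a * ∏ m : Fin k, (1 / (G.degree (w m.castSucc) : ℝ)) else 0) := by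
          refine Finset.sum_congr rfl fun a _ => ?_
          rw [ih a j, Finset.mul_sum]
          exact Finset.sum_congr rfl fun w _ => by rw [mul_ite, mul_zero]
      _ = ∑ w : Fin (k+1) → Fin n, ∑ a,
            (if w 0 = a ∧ w (Fin.last k) = j ∧ (∀ m : Fin k, G.Adj (w m.castSucc) (w m.succ))
             then P i a * ∏ m : Fin k, (1 / (G.degree (w m.castSucc) : ℝ)) else 0) :=
          Finset.sum_comm
      _ = ∑ w : Fin (k+1) → Fin n,
            (if w (Fin.last k) = j ∧ (∀ m : Fin k, G.Adj (w m.castSucc) (w m.succ))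
             then P i (w 0) * ∏ m : Fin k, (1 / (G.degree (w m.castSucc) : ℝ)) else 0) := by
          refine Finset.sum_congr rfl fun w _ => ?_
          simp only [ite_and, Finset.sum_ite_eq, Finset.mem_univ, if_true]
      _ = ∑ w : Fin (k+1) → Fin n,
            (if G.Adj i (w 0) ∧ w (Fin.last k) = j ∧ (∀ m : Fin k, G.Adj (w m.castSucc) (w m.succ))
             then (1 / (G.degree i : ℝ)) * ∏ m : Fin k, (1 / (G.degree (w m.castSucc) : ℝ))
             else 0) := by
          refine Finset.sum_congr rfl fun w _ => ?_
          rw [hP, SimpleGraph.adjMatrix_apply]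
          by_cases h2 : G.Adj i (w 0) <;>
            by_cases h3 : w (Fin.last k) = j ∧ ∀ m : Fin k, G.Adj (w m.castSucc) (w m.succ) <;>
            simp [h2, h3]
      _ = ∑ a, ∑ w : Fin (k+1) → Fin n,
            (if (Fin.cons (α := fun _ => Fin n) a w) 0 = i ∧ (Fin.cons (α := fun _ => Fin n) a w) (Fin.last (k+1)) = j ∧
                (∀ l : Fin (k+1), G.Adj ((Fin.cons (α := fun _ => Fin n) a w) l.castSucc) ((Fin.cons (α := fun _ => Fin n) a w) l.succ))
             then ∏ l : Fin (k+1), (1 / (G.degree ((Fin.cons (α := fun _ => Fin n) a w) l.castSucc) : ℝ))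
             else 0) := by
          rw [Finset.sum_congr rfl fun a (_ : a ∈ Finset.univ) =>
            Finset.sum_congr rfl fun w _ => hcons a w]
          have hsplit : ∀ a : Fin n, (∑ w : Fin (k+1) → Fin n,
              if a = i then
                (if G.Adj a (w 0) ∧ w (Fin.last k) = j ∧
                    (∀ m : Fin k, G.Adj (w m.castSucc) (w m.succ))
                 then (1 / (G.degree a : ℝ)) * ∏ m : Fin k, (1 / (G.degree (w m.castSucc) : ℝ))
                 else 0) else 0)
              = if a = i then (∑ w : Fin (k+1) → Fin n,
                  if G.Adj a (w 0) ∧ w (Fin.last k) = j ∧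
                      (∀ m : Fin k, G.Adj (w m.castSucc) (w m.succ))
                  then (1 / (G.degree a : ℝ)) * ∏ m : Fin k, (1 / (G.degree (w m.castSucc) : ℝ))
                  else 0) else 0 := by
            intro a; split <;> simp
          rw [Finset.sum_congr rfl fun a (_ : a ∈ Finset.univ) => hsplit a,
            Finset.sum_ite_eq' Finset.univ i]
          simp

lemma sum_walks (hdeg : ∀ i, 1 ≤ G.degree i) {P : Matrix (Fin n) (Fin n) ℝ}
    (hP : ∀ i j, P i j = (G.adjMatrix ℝ) i j / (G.degree i : ℝ)) (k : ℕ)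
    (φ : Fin n → Fin n → ℝ) :
    ∑ i, ∑ j, (P ^ k) i j * φ i j
      = ∑ w ∈ Finset.univ.filter
          (fun w : Fin (k+1) → Fin n => ∀ l : Fin k, G.Adj (w l.castSucc) (w l.succ)),
          φ (w 0) (w (Fin.last k)) * ∏ l : Fin k, (1 / (G.degree (w l.castSucc) : ℝ)) := by
  calc ∑ i, ∑ j, (P ^ k) i j * φ i j
      = ∑ i, ∑ j, ∑ w : Fin (k+1) → Fin n,
          (if w 0 = i ∧ w (Fin.last k) = j ∧ (∀ l : Fin k, G.Adj (w l.castSucc) (w l.succ))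
           then φ i j * ∏ l : Fin k, (1 / (G.degree (w l.castSucc) : ℝ)) else 0) := by
        refine Finset.sum_congr rfl fun i _ => Finset.sum_congr rfl fun j _ => ?_
        rw [walk_pow hdeg hP k i j, Finset.sum_mul]
        refine Finset.sum_congr rfl fun w _ => ?_
        rw [ite_mul, zero_mul, mul_comm]
    _ = ∑ w : Fin (k+1) → Fin n, ∑ i, ∑ j,
          (if w 0 = i ∧ w (Fin.last k) = j ∧ (∀ l : Fin k, G.Adj (w l.castSucc) (w l.succ))
           then φ i j * ∏ l : Fin k, (1 / (G.degree (w l.castSucc) : ℝ)) else 0) := by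
        exact (Finset.sum_congr rfl fun i _ => Finset.sum_comm).trans Finset.sum_comm
    _ = ∑ w : Fin (k+1) → Fin n,
          (if (∀ l : Fin k, G.Adj (w l.castSucc) (w l.succ))
           then φ (w 0) (w (Fin.last k)) * ∏ l : Fin k, (1 / (G.degree (w l.castSucc) : ℝ))
           else 0) := by
        refine Finset.sum_congr rfl fun w _ => ?_
        by_cases hw : ∀ l : Fin k, G.Adj (w l.castSucc) (w l.succ)
        · simp only [hw, implies_true, and_true, if_true]
          have hj : ∀ i : Fin n, (∑ j, if w 0 = i ∧ w (Fin.last k) = j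
                then φ i j * ∏ l : Fin k, (1 / (G.degree (w l.castSucc) : ℝ)) else 0)
              = if w 0 = i then
                  φ i (w (Fin.last k)) * ∏ l : Fin k, (1 / (G.degree (w l.castSucc) : ℝ))
                else 0 := by
            intro i
            by_cases h : w 0 = i
            · simp [h, Finset.sum_ite_eq]
            · simp [h]
          rw [Finset.sum_congr rfl fun i (_ : i ∈ Finset.univ) => hj i,
            Finset.sum_ite_eq Finset.univ (w 0)]
          simp
        · simp [hw]
    _ = _ := (Finset.sum_filter _ _).symm

lemma pr_eq_mid (k : ℕ) (w : Fin (k+1+1) → Fin n) :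
    ∏ l : Fin (k+1), (1 / (G.degree (w l.castSucc) : ℝ))
      = (1 / (G.degree (w 0) : ℝ)) *
          ∏ l : Fin (k+1+1),
            (if l ≠ 0 ∧ l ≠ Fin.last (k+1) then 1 / (G.degree (w l) : ℝ) else 1) := by
  have h0last : (0 : Fin (k+1+1)) ≠ Fin.last (k+1) := by
    intro h
    have := congrArg Fin.val h
    simp [Fin.last] at this
  have h1 : ∏ l : Fin (k+1+1), (if l ≠ Fin.last (k+1) then 1 / (G.degree (w l) : ℝ) else 1)
      = ∏ l : Fin (k+1), (1 / (G.degree (w l.castSucc) : ℝ)) := by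
    rw [Fin.prod_univ_castSucc, if_neg (by simp), mul_one]
    exact Finset.prod_congr rfl fun l _ => if_pos (Fin.castSucc_lt_last l).ne
  rw [← h1]
  calc ∏ l : Fin (k+1+1), (if l ≠ Fin.last (k+1) then 1 / (G.degree (w l) : ℝ) else 1)
      = (if (0 : Fin (k+1+1)) ≠ Fin.last (k+1) then 1 / (G.degree (w 0) : ℝ) else 1) *
        ∏ m : Fin (k+1), (if (m.succ : Fin (k+1+1)) ≠ Fin.last (k+1)
          then 1 / (G.degree (w m.succ) : ℝ) else 1) := Fin.prod_univ_succ _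
    _ = (1 / (G.degree (w 0) : ℝ)) *
        ∏ m : Fin (k+1), (if (m.succ : Fin (k+1+1)) ≠ 0 ∧ (m.succ : Fin (k+1+1)) ≠ Fin.last (k+1)
          then 1 / (G.degree (w m.succ) : ℝ) else 1) := by
        rw [if_pos h0last]
        congr 1
        refine Finset.prod_congr rfl fun m _ => if_congr ?_ rfl rfl
        simp [Fin.succ_ne_zero]
    _ = (1 / (G.degree (w 0) : ℝ)) *
        ∏ l : Fin (k+1+1),
          (if l ≠ 0 ∧ l ≠ Fin.last (k+1) then 1 / (G.degree (w l) : ℝ) else 1) := by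
        congr 1
        symm
        rw [Fin.prod_univ_succ, if_neg (by simp), one_mul]

lemma mid_pos (hdeg : ∀ i, 1 ≤ G.degree i) (k : ℕ) (w : Fin (k+1) → Fin n) :
    0 < ∏ l : Fin (k+1), (if l ≠ 0 ∧ l ≠ Fin.last k then 1 / (G.degree (w l) : ℝ) else 1) := by
  refine Finset.prod_pos fun l _ => ?_
  have : (0:ℝ) < (G.degree (w l) : ℝ) := by
    exact_mod_cast Nat.lt_of_lt_of_le Nat.zero_lt_one (hdeg (w l))
  split <;> positivity

lemma rev_sum (k : ℕ) (F : Fin n → Fin n → ℝ) :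
    ∑ w ∈ Finset.univ.filter
        (fun w : Fin (k+1) → Fin n => ∀ l : Fin k, G.Adj (w l.castSucc) (w l.succ)),
        F (w 0) (w (Fin.last k)) *
          ∏ l : Fin (k+1), (if l ≠ 0 ∧ l ≠ Fin.last k then 1 / (G.degree (w l) : ℝ) else 1)
    = ∑ w ∈ Finset.univ.filter
        (fun w : Fin (k+1) → Fin n => ∀ l : Fin k, G.Adj (w l.castSucc) (w l.succ)),
        F (w (Fin.last k)) (w 0) *
          ∏ l : Fin (k+1), (if l ≠ 0 ∧ l ≠ Fin.last k then 1 / (G.degree (w l) : ℝ) else 1) := by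
  have hrev0 : (Fin.rev (0 : Fin (k+1))) = Fin.last k := by
    rw [← Fin.rev_last, Fin.rev_rev]
  have hmem : ∀ w : Fin (k+1) → Fin n, (∀ l : Fin k, G.Adj (w l.castSucc) (w l.succ)) →
      (∀ l : Fin k, G.Adj ((w ∘ Fin.rev) l.castSucc) ((w ∘ Fin.rev) l.succ)) := by
    intro w hw l
    have := (hw l.rev).symm
    simpa [Function.comp, Fin.rev_castSucc, Fin.rev_succ] using this
  refine Finset.sum_nbij' (fun w => w ∘ Fin.rev) (fun w => w ∘ Fin.rev) ?_ ?_ ?_ ?_ ?_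
  · intro w hw
    simp only [Finset.mem_filter, Finset.mem_univ, true_and] at hw ⊢
    exact hmem w hw
  · intro w hw
    simp only [Finset.mem_filter, Finset.mem_univ, true_and] at hw ⊢
    exact hmem w hw
  · intro w _; funext l; simp [Function.comp, Fin.rev_rev]
  · intro w _; funext l; simp [Function.comp, Fin.rev_rev]
  · intro w _
    simp only [Function.comp_apply, Fin.rev_last, hrev0]
    congr 1
    calc ∏ l : Fin (k+1), (if l ≠ 0 ∧ l ≠ Fin.last k then 1 / (G.degree (w l) : ℝ) else 1)
        = ∏ l : Fin (k+1),
            (if l.rev ≠ 0 ∧ l.rev ≠ Fin.last k then 1 / (G.degree (w l.rev) : ℝ) else 1) :=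
          (Equiv.prod_comp (Fin.revPerm) fun l =>
            (if l ≠ 0 ∧ l ≠ Fin.last k then 1 / (G.degree (w l) : ℝ) else 1)).symm
      _ = ∏ l : Fin (k+1),
            (if l ≠ 0 ∧ l ≠ Fin.last k then 1 / (G.degree (w l.rev) : ℝ) else 1) := by
          refine Finset.prod_congr rfl fun l _ => if_congr ?_ rfl rfl
          have h0 : l.rev = 0 ↔ l = Fin.last k := by rw [← Fin.rev_last, Fin.rev_inj]
          have hl : l.rev = Fin.last k ↔ l = 0 := by rw [← hrev0, Fin.rev_inj]
          simp only [Ne, h0, hl]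
          exact and_comm

end Stmt3Aux

open Stmt3Aux in
theorem stmt_3 (n : ℕ) (hn : 1 ≤ n) (G : SimpleGraph (Fin n)) [DecidableRel G.Adj]
    (hdeg : ∀ i, 1 ≤ G.degree i) (k : ℕ)
    (P : Matrix (Fin n) (Fin n) ℝ)
    (hP : ∀ i j, P i j = (G.adjMatrix ℝ) i j / (G.degree i : ℝ)) :
    ((1 / (n : ℝ)) * ∑ i, ((∑ j, (P ^ k) i j * (G.degree j : ℝ)) - (G.degree i : ℝ))
      = (1 / (2 * (n : ℝ))) *
          ∑ w ∈ Finset.univ.filter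
            (fun w : Fin (k + 1) → Fin n => ∀ l : Fin k, G.Adj (w l.castSucc) (w l.succ)),
            (Real.sqrt ((G.degree (w (Fin.last k)) : ℝ) / (G.degree (w 0) : ℝ))
              - Real.sqrt ((G.degree (w 0) : ℝ) / (G.degree (w (Fin.last k)) : ℝ)))^2
            * ∏ l : Fin (k + 1),
                (if l ≠ 0 ∧ l ≠ Fin.last k then 1 / (G.degree (w l) : ℝ) else 1))
    ∧ ((1 / (n : ℝ)) * ∑ i, ((∑ j, (P ^ k) i j * (G.degree j : ℝ)) - (G.degree i : ℝ)) = 0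
        ↔ ∀ w : Fin (k + 1) → Fin n,
            (∀ l : Fin k, G.Adj (w l.castSucc) (w l.succ)) →
            G.degree (w 0) = G.degree (w (Fin.last k))) := by
  classical
  have hd : ∀ i : Fin n, (0:ℝ) < (G.degree i : ℝ) := fun i => by
    exact_mod_cast Nat.lt_of_lt_of_le Nat.zero_lt_one (hdeg i)
  have hn0 : (0:ℝ) < (n : ℝ) := by exact_mod_cast Nat.lt_of_lt_of_le Nat.zero_lt_one hn
  cases k with
  | zero =>
    have h00 : Fin.last 0 = (0 : Fin 1) := by decide
    have hL : ∀ i : Fin n, (∑ j, (P ^ 0) i j * (G.degree j : ℝ)) = (G.degree i : ℝ) := by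
      intro i
      rw [pow_zero]
      simp [Matrix.one_apply, ite_mul, Finset.sum_ite_eq]
    have hzero : (1 / (n : ℝ)) *
        ∑ i, ((∑ j, (P ^ 0) i j * (G.degree j : ℝ)) - (G.degree i : ℝ)) = 0 := by
      have hs : ∑ i, ((∑ j, (P ^ 0) i j * (G.degree j : ℝ)) - (G.degree i : ℝ)) = 0 :=
        Finset.sum_eq_zero fun i _ => by rw [hL i, sub_self]
      rw [hs, mul_zero]
    refine ⟨?_, ?_⟩
    · rw [hzero]
      symm
      rw [mul_eq_zero]
      right
      apply Finset.sum_eq_zero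
      intro w _
      rw [h00, sub_self]
      simp
    · rw [hzero]
      constructor
      · intro _ w _
        rw [h00]
      · intro _
        rfl
  | succ m =>
    have hA : ∑ i, ∑ j, (P ^ (m+1)) i j * (G.degree j : ℝ)
        = ∑ w ∈ Finset.univ.filter
            (fun w : Fin (m+1+1) → Fin n => ∀ l : Fin (m+1), G.Adj (w l.castSucc) (w l.succ)),
            ((G.degree (w (Fin.last (m+1))) : ℝ) / (G.degree (w 0) : ℝ)) *
              ∏ l : Fin (m+1+1),
                (if l ≠ 0 ∧ l ≠ Fin.last (m+1) then 1 / (G.degree (w l) : ℝ) else 1) := by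
      rw [sum_walks hdeg hP (m+1) (fun _ j => (G.degree j : ℝ))]
      refine Finset.sum_congr rfl fun w _ => ?_
      rw [pr_eq_mid]
      ring
    have hrow : ∑ i, ∑ j, (P ^ (m+1)) i j * (G.degree i : ℝ) = ∑ i, (G.degree i : ℝ) := by
      refine Finset.sum_congr rfl fun i _ => ?_
      rw [← Finset.sum_mul, rowsum hdeg hP, one_mul]
    have hB : (∑ i, (G.degree i : ℝ))
        = ∑ w ∈ Finset.univ.filter
            (fun w : Fin (m+1+1) → Fin n => ∀ l : Fin (m+1), G.Adj (w l.castSucc) (w l.succ)),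
            ∏ l : Fin (m+1+1),
              (if l ≠ 0 ∧ l ≠ Fin.last (m+1) then 1 / (G.degree (w l) : ℝ) else 1) := by
      rw [← hrow, sum_walks hdeg hP (m+1) (fun i _ => (G.degree i : ℝ))]
      refine Finset.sum_congr rfl fun w _ => ?_
      rw [pr_eq_mid, ← mul_assoc, mul_one_div, div_self (hd (w 0)).ne', one_mul]
    have hrev : ∑ w ∈ Finset.univ.filter
            (fun w : Fin (m+1+1) → Fin n => ∀ l : Fin (m+1), G.Adj (w l.castSucc) (w l.succ)),
            ((G.degree (w 0) : ℝ) / (G.degree (w (Fin.last (m+1))) : ℝ)) *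
              ∏ l : Fin (m+1+1),
                (if l ≠ 0 ∧ l ≠ Fin.last (m+1) then 1 / (G.degree (w l) : ℝ) else 1)
        = ∑ w ∈ Finset.univ.filter
            (fun w : Fin (m+1+1) → Fin n => ∀ l : Fin (m+1), G.Adj (w l.castSucc) (w l.succ)),
            ((G.degree (w (Fin.last (m+1))) : ℝ) / (G.degree (w 0) : ℝ)) *
              ∏ l : Fin (m+1+1),
                (if l ≠ 0 ∧ l ≠ Fin.last (m+1) then 1 / (G.degree (w l) : ℝ) else 1) :=
      rev_sum (m+1) (fun a b => (G.degree a : ℝ) / (G.degree b : ℝ))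
    have hterm : ∀ w ∈ Finset.univ.filter
            (fun w : Fin (m+1+1) → Fin n => ∀ l : Fin (m+1), G.Adj (w l.castSucc) (w l.succ)),
        (Real.sqrt ((G.degree (w (Fin.last (m+1))) : ℝ) / (G.degree (w 0) : ℝ))
            - Real.sqrt ((G.degree (w 0) : ℝ) / (G.degree (w (Fin.last (m+1))) : ℝ)))^2
          * ∏ l : Fin (m+1+1),
              (if l ≠ 0 ∧ l ≠ Fin.last (m+1) then 1 / (G.degree (w l) : ℝ) else 1)
        = ((G.degree (w (Fin.last (m+1))) : ℝ) / (G.degree (w 0) : ℝ)) *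
              (∏ l : Fin (m+1+1),
                (if l ≠ 0 ∧ l ≠ Fin.last (m+1) then 1 / (G.degree (w l) : ℝ) else 1))
          + ((G.degree (w 0) : ℝ) / (G.degree (w (Fin.last (m+1))) : ℝ)) *
              (∏ l : Fin (m+1+1),
                (if l ≠ 0 ∧ l ≠ Fin.last (m+1) then 1 / (G.degree (w l) : ℝ) else 1))
          - 2 * (∏ l : Fin (m+1+1),
                (if l ≠ 0 ∧ l ≠ Fin.last (m+1) then 1 / (G.degree (w l) : ℝ) else 1)) := by
      intro w _
      have ha : (0:ℝ) ≤ (G.degree (w (Fin.last (m+1))) : ℝ) / (G.degree (w 0) : ℝ) :=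
        le_of_lt (div_pos (hd _) (hd _))
      have hb : (0:ℝ) ≤ (G.degree (w 0) : ℝ) / (G.degree (w (Fin.last (m+1))) : ℝ) :=
        le_of_lt (div_pos (hd _) (hd _))
      have hsq : (Real.sqrt ((G.degree (w (Fin.last (m+1))) : ℝ) / (G.degree (w 0) : ℝ))
            - Real.sqrt ((G.degree (w 0) : ℝ) / (G.degree (w (Fin.last (m+1))) : ℝ)))^2
          = (G.degree (w (Fin.last (m+1))) : ℝ) / (G.degree (w 0) : ℝ)
            + (G.degree (w 0) : ℝ) / (G.degree (w (Fin.last (m+1))) : ℝ) - 2 := by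
        rw [sub_sq, Real.sq_sqrt ha, Real.sq_sqrt hb, mul_assoc, ← Real.sqrt_mul ha]
        have h1 : (G.degree (w (Fin.last (m+1))) : ℝ) / (G.degree (w 0) : ℝ) *
            ((G.degree (w 0) : ℝ) / (G.degree (w (Fin.last (m+1))) : ℝ)) = 1 := by
          rw [div_mul_div_comm, mul_comm]
          exact div_self (mul_pos (hd _) (hd _)).ne'
        rw [h1, Real.sqrt_one]
        ring
      rw [hsq]
      ring
    have hsum : ∑ w ∈ Finset.univ.filter
            (fun w : Fin (m+1+1) → Fin n => ∀ l : Fin (m+1), G.Adj (w l.castSucc) (w l.succ)),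
          (Real.sqrt ((G.degree (w (Fin.last (m+1))) : ℝ) / (G.degree (w 0) : ℝ))
              - Real.sqrt ((G.degree (w 0) : ℝ) / (G.degree (w (Fin.last (m+1))) : ℝ)))^2
            * ∏ l : Fin (m+1+1),
                (if l ≠ 0 ∧ l ≠ Fin.last (m+1) then 1 / (G.degree (w l) : ℝ) else 1)
        = 2 * (∑ w ∈ Finset.univ.filter
            (fun w : Fin (m+1+1) → Fin n => ∀ l : Fin (m+1), G.Adj (w l.castSucc) (w l.succ)),
            ((G.degree (w (Fin.last (m+1))) : ℝ) / (G.degree (w 0) : ℝ)) *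
              ∏ l : Fin (m+1+1),
                (if l ≠ 0 ∧ l ≠ Fin.last (m+1) then 1 / (G.degree (w l) : ℝ) else 1))
          - 2 * (∑ w ∈ Finset.univ.filter
            (fun w : Fin (m+1+1) → Fin n => ∀ l : Fin (m+1), G.Adj (w l.castSucc) (w l.succ)),
            ∏ l : Fin (m+1+1),
              (if l ≠ 0 ∧ l ≠ Fin.last (m+1) then 1 / (G.degree (w l) : ℝ) else 1)) := by
      rw [Finset.sum_congr rfl hterm, Finset.sum_sub_distrib, Finset.sum_add_distrib, hrev,
        ← Finset.mul_sum]
      ring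
    have key : (1 / (n : ℝ)) *
        ∑ i, ((∑ j, (P ^ (m+1)) i j * (G.degree j : ℝ)) - (G.degree i : ℝ))
        = (1 / (2 * (n : ℝ))) *
          ∑ w ∈ Finset.univ.filter
            (fun w : Fin (m+1+1) → Fin n => ∀ l : Fin (m+1), G.Adj (w l.castSucc) (w l.succ)),
            (Real.sqrt ((G.degree (w (Fin.last (m+1))) : ℝ) / (G.degree (w 0) : ℝ))
              - Real.sqrt ((G.degree (w 0) : ℝ) / (G.degree (w (Fin.last (m+1))) : ℝ)))^2
            * ∏ l : Fin (m+1+1),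
                (if l ≠ 0 ∧ l ≠ Fin.last (m+1) then 1 / (G.degree (w l) : ℝ) else 1) := by
      rw [Finset.sum_sub_distrib, hA, hB, hsum]
      field_simp
    refine ⟨key, ?_⟩
    rw [key]
    have h2n : (0:ℝ) < 1 / (2 * (n:ℝ)) := by positivity
    have hnonneg : ∀ w ∈ Finset.univ.filter
            (fun w : Fin (m+1+1) → Fin n => ∀ l : Fin (m+1), G.Adj (w l.castSucc) (w l.succ)),
        (0:ℝ) ≤ (Real.sqrt ((G.degree (w (Fin.last (m+1))) : ℝ) / (G.degree (w 0) : ℝ))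
              - Real.sqrt ((G.degree (w 0) : ℝ) / (G.degree (w (Fin.last (m+1))) : ℝ)))^2
            * ∏ l : Fin (m+1+1),
                (if l ≠ 0 ∧ l ≠ Fin.last (m+1) then 1 / (G.degree (w l) : ℝ) else 1) :=
      fun w _ => mul_nonneg (sq_nonneg _) (le_of_lt (mid_pos hdeg (m+1) w))
    constructor
    · intro h0 w hw
      have hS : ∑ w ∈ Finset.univ.filter
            (fun w : Fin (m+1+1) → Fin n => ∀ l : Fin (m+1), G.Adj (w l.castSucc) (w l.succ)),
          (Real.sqrt ((G.degree (w (Fin.last (m+1))) : ℝ) / (G.degree (w 0) : ℝ))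
              - Real.sqrt ((G.degree (w 0) : ℝ) / (G.degree (w (Fin.last (m+1))) : ℝ)))^2
            * ∏ l : Fin (m+1+1),
                (if l ≠ 0 ∧ l ≠ Fin.last (m+1) then 1 / (G.degree (w l) : ℝ) else 1) = 0 := by
        rcases mul_eq_zero.mp h0 with h | h
        · exact absurd h h2n.ne'
        · exact h
      have hterm0 := (Finset.sum_eq_zero_iff_of_nonneg hnonneg).mp hS w
        (Finset.mem_filter.mpr ⟨Finset.mem_univ _, hw⟩)
      have hsq0 : (Real.sqrt ((G.degree (w (Fin.last (m+1))) : ℝ) / (G.degree (w 0) : ℝ))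
              - Real.sqrt ((G.degree (w 0) : ℝ) / (G.degree (w (Fin.last (m+1))) : ℝ)))^2 = 0 := by
        rcases mul_eq_zero.mp hterm0 with h | h
        · exact h
        · exact absurd h (mid_pos hdeg (m+1) w).ne'
      have hsqrt : Real.sqrt ((G.degree (w (Fin.last (m+1))) : ℝ) / (G.degree (w 0) : ℝ))
          = Real.sqrt ((G.degree (w 0) : ℝ) / (G.degree (w (Fin.last (m+1))) : ℝ)) := by
        have h2 := (pow_eq_zero_iff (two_ne_zero)).mp hsq0
        linarith [h2]
      have ha : (0:ℝ) ≤ (G.degree (w (Fin.last (m+1))) : ℝ) / (G.degree (w 0) : ℝ) :=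
        le_of_lt (div_pos (hd _) (hd _))
      have hb : (0:ℝ) ≤ (G.degree (w 0) : ℝ) / (G.degree (w (Fin.last (m+1))) : ℝ) :=
        le_of_lt (div_pos (hd _) (hd _))
      have heq : (G.degree (w (Fin.last (m+1))) : ℝ) / (G.degree (w 0) : ℝ)
          = (G.degree (w 0) : ℝ) / (G.degree (w (Fin.last (m+1))) : ℝ) := by
        calc (G.degree (w (Fin.last (m+1))) : ℝ) / (G.degree (w 0) : ℝ)
            = (Real.sqrt ((G.degree (w (Fin.last (m+1))) : ℝ) / (G.degree (w 0) : ℝ)))^2 :=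
              (Real.sq_sqrt ha).symm
          _ = (Real.sqrt ((G.degree (w 0) : ℝ) / (G.degree (w (Fin.last (m+1))) : ℝ)))^2 := by
              rw [hsqrt]
          _ = _ := Real.sq_sqrt hb
      have hdd : (G.degree (w (Fin.last (m+1))) : ℝ) = (G.degree (w 0) : ℝ) := by
        have h0' := (hd (w 0)).ne'
        have hl' := (hd (w (Fin.last (m+1)))).ne'
        rw [div_eq_div_iff h0' hl'] at heq
        exact (mul_self_inj (le_of_lt (hd _)) (le_of_lt (hd _))).mp heq
      exact_mod_cast hdd.symm
    · intro hdd
      have hz : ∀ w ∈ Finset.univ.filter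
            (fun w : Fin (m+1+1) → Fin n => ∀ l : Fin (m+1), G.Adj (w l.castSucc) (w l.succ)),
          (Real.sqrt ((G.degree (w (Fin.last (m+1))) : ℝ) / (G.degree (w 0) : ℝ))
              - Real.sqrt ((G.degree (w 0) : ℝ) / (G.degree (w (Fin.last (m+1))) : ℝ)))^2
            * ∏ l : Fin (m+1+1),
                (if l ≠ 0 ∧ l ≠ Fin.last (m+1) then 1 / (G.degree (w l) : ℝ) else 1) = 0 := by
        intro w hwW
        have hw := (Finset.mem_filter.mp hwW).2
        have h := hdd w hw
        rw [h, sub_self]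
        simp
      rw [Finset.sum_eq_zero hz, mul_zero]
end

section
/- Let G be a finite connected simple graph with all degrees at least 1, and let k be odd. The average k-level friendship bias for the simple (backtracking) random walk equals zero if and only if G is regular. -/
open Finset Matrix

theorem stmt_4 (n : ℕ) (G : SimpleGraph (Fin n)) [DecidableRel G.Adj]
    (hconn : G.Connected) (hdeg : ∀ i, 1 ≤ G.degree i) (k : ℕ) (hk : Odd k)
    (P : Matrix (Fin n) (Fin n) ℝ)
    (hP : ∀ i j, P i j = (G.adjMatrix ℝ) i j / (G.degree i : ℝ)) :
    (1 / (n : ℝ)) * ∑ i, ((∑ j, (P ^ k) i j * (G.degree j : ℝ)) - (G.degree i : ℝ)) = 0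
      ↔ ∀ i j, G.degree i = G.degree j := by
  classical
  set d : Fin n → ℝ := fun i => (G.degree i : ℝ) with hd
  have hdpos : ∀ i, (0:ℝ) < d i := by
    intro i
    have := hdeg i
    simp only [hd]
    exact_mod_cast Nat.lt_of_lt_of_le Nat.zero_lt_one this
  have hdne : ∀ i, d i ≠ 0 := fun i => (hdpos i).ne'
  have hArow : ∀ i, ∑ j, (G.adjMatrix ℝ) i j = d i := by
    intro i
    simp [SimpleGraph.adjMatrix_apply, hd, SimpleGraph.degree,
      SimpleGraph.neighborFinset_eq_filter, Finset.sum_boole]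
  have hAsymm : ∀ a b, (G.adjMatrix ℝ) a b = (G.adjMatrix ℝ) b a := by
    intro a b; simp [SimpleGraph.adjMatrix_apply, SimpleGraph.adj_comm]
  have hPnn : ∀ i j, 0 ≤ P i j := by
    intro i j; rw [hP]
    apply div_nonneg _ (hdpos i).le
    by_cases h : G.Adj i j <;> simp [h]
  have hQnn : ∀ m i j, 0 ≤ (P ^ m) i j := by
    intro m
    induction m with
    | zero =>
      intro i j; rw [pow_zero]
      by_cases h : i = j <;> simp [Matrix.one_apply, h]
    | succ m ih =>
      intro i j; rw [pow_succ, Matrix.mul_apply]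
      exact Finset.sum_nonneg fun a _ => mul_nonneg (ih i a) (hPnn a j)
  have hProw : ∀ i, ∑ j, P i j = 1 := by
    intro i
    simp only [hP]
    rw [← Finset.sum_div, hArow, div_self (hdne i)]
  have hQrow : ∀ m i, ∑ j, (P ^ m) i j = 1 := by
    intro m
    induction m with
    | zero => intro i; simp [Matrix.one_apply]
    | succ m ih =>
      intro i
      rw [pow_succ]
      simp only [Matrix.mul_apply]
      rw [Finset.sum_comm]
      have h1 : ∀ a, ∑ j, (P ^ m) i a * P a j = (P ^ m) i a := by
        intro a; rw [← Finset.mul_sum, hProw, mul_one]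
      rw [Finset.sum_congr rfl (fun a _ => h1 a), ih]
  have hP' : ∀ i j, P i j = (G.adjMatrix ℝ) i j / d i := hP
  have hDP : ∀ a b, d a * P a b = d b * P b a := by
    intro a b
    rw [hP', hP']
    rw [mul_div_assoc', mul_comm (d a), mul_div_assoc, div_self (hdne a), mul_one]
    rw [mul_div_assoc', mul_comm (d b), mul_div_assoc, div_self (hdne b), mul_one]
    exact hAsymm a b
  have hrev : ∀ m i j, d i * (P ^ m) i j = d j * (P ^ m) j i := by
    intro m
    induction m with
    | zero =>
      intro i j; by_cases h : i = j <;> simp [Matrix.one_apply, h, eq_comm]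
    | succ m ih =>
      intro i j
      have hc : P ^ m * P = P * P ^ m := (pow_succ P m).symm.trans (pow_succ' P m)
      rw [pow_succ]
      conv_rhs => rw [hc]
      simp only [Matrix.mul_apply]
      rw [Finset.mul_sum, Finset.mul_sum]
      apply Finset.sum_congr rfl
      intro a _
      calc d i * ((P ^ m) i a * P a j) = (d a * (P ^ m) a i) * P a j := by
            rw [← ih]; ring
        _ = (P ^ m) a i * (d a * P a j) := by ring
        _ = (P ^ m) a i * (d j * P j a) := by rw [hDP]
        _ = d j * (P j a * (P ^ m) a i) := by ring
  have hPpos : ∀ i j, G.Adj i j → 0 < P i j := by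
    intro i j h
    rw [hP]
    have h1 : (G.adjMatrix ℝ) i j = 1 := by simp [h]
    rw [h1]
    exact div_pos one_pos (hdpos i)
  have hdiag : ∀ i j, G.Adj i j → 0 < (P ^ 2) i i := by
    intro i j h
    rw [pow_two, Matrix.mul_apply]
    apply Finset.sum_pos' (fun a _ => mul_nonneg (hPnn i a) (hPnn a i))
    exact ⟨j, Finset.mem_univ j, mul_pos (hPpos i j h) (hPpos j i h.symm)⟩
  have hQodd : ∀ m i j, G.Adj i j → 0 < (P ^ (2*m+1)) i j := by
    intro m
    induction m with
    | zero => intro i j h; simpa using hPpos i j h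
    | succ m ih =>
      intro i j h
      have heq : (2*(m+1)+1) = 2 + (2*m+1) := by ring
      rw [heq, pow_add, Matrix.mul_apply]
      apply Finset.sum_pos' (fun a _ => mul_nonneg (hQnn 2 i a) (hQnn _ a j))
      exact ⟨i, Finset.mem_univ i, mul_pos (hdiag i j h) (ih i j h)⟩
  have hQposk : ∀ i j, G.Adj i j → 0 < (P ^ k) i j := by
    obtain ⟨m, hm⟩ := hk
    intro i j h
    have hm' : k = 2 * m + 1 := by omega
    rw [hm']
    exact hQodd m i j h
  have hne : Nonempty (Fin n) := hconn.nonempty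
  have hnpos : 0 < n := Fin.pos_iff_nonempty.mpr hne
  have hn : (n : ℝ) ≠ 0 := Nat.cast_ne_zero.mpr hnpos.ne'
  have hT : (∑ i, ((∑ j, (P ^ k) i j * d j) - d i))
      = ∑ i, ∑ j, (P ^ k) i j * (d j - d i) := by
    apply Finset.sum_congr rfl
    intro i _
    have h2 : ∑ j, (P ^ k) i j * (d j - d i)
        = (∑ j, (P ^ k) i j * d j) - (∑ j, (P ^ k) i j * d i) := by
      rw [← Finset.sum_sub_distrib]
      exact Finset.sum_congr rfl fun j _ => by ring
    rw [h2, ← Finset.sum_mul, hQrow, one_mul]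
  have hkey : ∀ i j, (P ^ k) i j * (d j - d i) + (P ^ k) j i * (d i - d j)
      = (P ^ k) i j * (d j - d i)^2 / d j := by
    intro i j
    rw [eq_div_iff (hdne j)]
    linear_combination (d j - d i) * hrev k i j
  have h2T : (∑ i, ∑ j, (P ^ k) i j * (d j - d i))
      + (∑ i, ∑ j, (P ^ k) i j * (d j - d i))
      = ∑ i, ∑ j, (P ^ k) i j * (d j - d i)^2 / d j := by
    have hswap : (∑ i, ∑ j, (P ^ k) i j * (d j - d i))
        = ∑ i, ∑ j, (P ^ k) j i * (d i - d j) := Finset.sum_comm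
    nth_rewrite 2 [hswap]
    rw [← Finset.sum_add_distrib]
    apply Finset.sum_congr rfl
    intro i _
    rw [← Finset.sum_add_distrib]
    exact Finset.sum_congr rfl fun j _ => hkey i j
  constructor
  · intro h0
    have hT0 : (∑ i, ((∑ j, (P ^ k) i j * d j) - d i)) = 0 := by
      rcases mul_eq_zero.mp h0 with h | h
      · exact absurd h (one_div_ne_zero hn)
      · exact h
    have hsum0 : ∑ i, ∑ j, (P ^ k) i j * (d j - d i)^2 / d j = 0 := by
      rw [← h2T, ← hT, hT0, add_zero]
    have hnn : ∀ i j, 0 ≤ (P ^ k) i j * (d j - d i)^2 / d j := fun i j =>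
      div_nonneg (mul_nonneg (hQnn k i j) (sq_nonneg _)) (hdpos j).le
    have hterm : ∀ i j, (P ^ k) i j * (d j - d i)^2 / d j = 0 := by
      intro i j
      have houter := (Finset.sum_eq_zero_iff_of_nonneg
        (fun i _ => Finset.sum_nonneg fun j _ => hnn i j)).mp hsum0 i (Finset.mem_univ i)
      exact (Finset.sum_eq_zero_iff_of_nonneg
        (fun j _ => hnn i j)).mp houter j (Finset.mem_univ j)
    have hadj : ∀ i j, G.Adj i j → d i = d j := by
      intro i j hij
      have ht := hterm i j
      rw [div_eq_zero_iff] at ht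
      rcases ht with ht | ht
      · rcases mul_eq_zero.mp ht with h | h
        · exact absurd h (hQposk i j hij).ne'
        · have := sq_eq_zero_iff.mp h
          linarith [sub_eq_zero.mp this]
      · exact absurd ht (hdne j)
    suffices h : ∀ (a b : Fin n), G.Reachable a b → d a = d b by
      intro i j
      exact Nat.cast_inj.mp (h i j (hconn i j))
    intro a b hr
    obtain ⟨w⟩ := hr
    induction w with
    | nil => rfl
    | cons hstep p ih => exact (hadj _ _ hstep).trans ih
  · intro hreg
    have hz : (∑ i, ((∑ j, (P ^ k) i j * d j) - d i)) = 0 := by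
      apply Finset.sum_eq_zero
      intro i _
      have hdi : ∀ j, d j = d i := by
        intro j; simp only [hd]; exact_mod_cast hreg j i
      rw [sub_eq_zero]
      calc ∑ j, (P ^ k) i j * d j = ∑ j, (P ^ k) i j * d i := by
            exact Finset.sum_congr rfl fun j _ => by rw [hdi j]
        _ = d i := by rw [← Finset.sum_mul, hQrow, one_mul]
    rw [hz, mul_zero]
end

section
/- Let G be a finite connected non-bipartite simple graph with all degrees at least 1, and let k be even. If the average k-level friendship bias for the simple random walk equals zero, then G is regular. -/
open Finset SimpleGraph

/-- back-and-forth walk of even length at a vertex with a neighbor -/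
lemma aux_backforth {V : Type*} {G : SimpleGraph V} {i v : V} (h : G.Adj i v) :
    ∀ m : ℕ, ∃ p : G.Walk i i, p.length = 2 * m := by
  intro m
  induction m with
  | zero => exact ⟨.nil, rfl⟩
  | succ m ih =>
    obtain ⟨p, hp⟩ := ih
    exact ⟨.cons h (.cons h.symm p), by simp [hp]; ring⟩

/-- a connected non-2-colorable graph has an odd closed walk -/
lemma aux_odd_closed {V : Type*} {G : SimpleGraph V} (hconn : G.Connected)
    (hnb : ¬ G.Colorable 2) : ∃ (c : V) (w : G.Walk c c), Odd w.length := by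
  by_contra hcon
  push_neg at hcon
  apply hnb
  obtain ⟨r⟩ := hconn.nonempty
  refine ⟨Coloring.mk (fun v => (⟨G.dist r v % 2, Nat.mod_lt _ two_pos⟩ : Fin 2)) ?_⟩
  intro u v huv hpar
  have hpar' : G.dist r u % 2 = G.dist r v % 2 := by
    simpa [Fin.ext_iff] using hpar
  obtain ⟨p, hp⟩ := hconn.exists_walk_length_eq_dist r u
  obtain ⟨q, hq⟩ := hconn.exists_walk_length_eq_dist r v
  have hodd := hcon r (p.append ((Walk.cons huv Walk.nil).append q.reverse))
  rw [Nat.odd_iff] at hodd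
  simp only [Walk.length_append, Walk.length_cons, Walk.length_nil,
    Walk.length_reverse, hp, hq] at hodd
  omega

/-- connected + odd closed walk gives an even walk between any two vertices -/
lemma aux_even_walk {V : Type*} {G : SimpleGraph V} (hconn : G.Connected)
    (hnb : ¬ G.Colorable 2) (i j : V) : ∃ p : G.Walk i j, Even p.length := by
  obtain ⟨c, w, hw⟩ := aux_odd_closed hconn hnb
  obtain ⟨p⟩ := hconn.preconnected i c
  obtain ⟨q⟩ := hconn.preconnected c j
  rcases Nat.even_or_odd (p.length + q.length) with he | ho
  · exact ⟨p.append q, by simpa using he⟩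
  · refine ⟨p.append (w.append q), ?_⟩
    simp only [Walk.length_append]
    rw [Nat.odd_iff] at ho hw
    rw [Nat.even_iff]
    omega

theorem stmt_5 (n : ℕ) (G : SimpleGraph (Fin n)) [DecidableRel G.Adj]
    (hconn : G.Connected) (hnonbip : ¬ G.Colorable 2)
    (hdeg : ∀ i, 1 ≤ G.degree i) (k : ℕ) (hk : Even k) (hk1 : 1 ≤ k)
    (P : Matrix (Fin n) (Fin n) ℝ)
    (hP : ∀ i j, P i j = (G.adjMatrix ℝ) i j / (G.degree i : ℝ))
    (hzero : (1 / (n : ℝ)) *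
      ∑ i, ((∑ j, (P ^ k) i j * (G.degree j : ℝ)) - (G.degree i : ℝ)) = 0) :
    ∀ i j, G.degree i = G.degree j := by
  set d : Fin n → ℝ := fun i => (G.degree i : ℝ) with hd_def
  have hd : ∀ i, 0 < d i := fun i => by
    have := hdeg i
    simp only [hd_def]
    exact_mod_cast Nat.lt_of_lt_of_le Nat.zero_lt_one this
  have hdne : ∀ i, d i ≠ 0 := fun i => (hd i).ne'
  -- degree as row sum of adjacency matrix
  have hArow : ∀ i, ∑ j, (G.adjMatrix ℝ) i j = d i := by
    intro i
    simp only [hd_def]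
    simp only [adjMatrix_apply, SimpleGraph.degree, neighborFinset_eq_filter,
      Finset.sum_boole]
  -- entries of P are nonneg
  have hPnn : ∀ i j, 0 ≤ P i j := by
    intro i j
    rw [hP]
    apply div_nonneg _ (hd i).le
    rw [adjMatrix_apply]
    split <;> norm_num
  -- entries of P^m are nonneg
  have hPk_nn : ∀ m, ∀ i j, 0 ≤ (P ^ m) i j := by
    intro m
    induction m with
    | zero =>
      intro i j
      rw [pow_zero, Matrix.one_apply]
      split <;> norm_num
    | succ m ih =>
      intro i j
      rw [pow_succ, Matrix.mul_apply]
      exact Finset.sum_nonneg fun l _ => mul_nonneg (ih i l) (hPnn l j)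
  -- row sums of P are 1
  have hProw : ∀ i, ∑ j, P i j = 1 := by
    intro i
    have h1 : ∑ j, P i j = (∑ j, (G.adjMatrix ℝ) i j) / d i := by
      rw [Finset.sum_div]
      exact Finset.sum_congr rfl fun j _ => hP i j
    rw [h1, hArow, div_self (hdne i)]
  -- row sums of P^m are 1
  have hPkrow : ∀ m, ∀ i, ∑ j, (P ^ m) i j = 1 := by
    intro m
    induction m with
    | zero => intro i; simp [Matrix.one_apply]
    | succ m ih =>
      intro i
      simp only [pow_succ, Matrix.mul_apply]
      rw [Finset.sum_comm]
      calc ∑ l, ∑ j, (P ^ m) i l * P l j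
          = ∑ l, (P ^ m) i l * ∑ j, P l j :=
            Finset.sum_congr rfl fun l _ => (Finset.mul_sum _ _ _).symm
        _ = ∑ l, (P ^ m) i l :=
            Finset.sum_congr rfl fun l _ => by rw [hProw l, mul_one]
        _ = 1 := ih i
  -- one step reversibility
  have hrev1 : ∀ i j, d i * P i j = (G.adjMatrix ℝ) i j := by
    intro i j
    rw [hP]
    rw [show ((G.degree i : ℝ)) = d i from rfl, mul_comm, div_mul_cancel₀ _ (hdne i)]
  -- reversibility: d i * (P^m) i j = d j * (P^m) j i
  have hrev : ∀ m, ∀ i j, d i * (P ^ m) i j = d j * (P ^ m) j i := by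
    intro m
    induction m with
    | zero =>
      intro i j
      by_cases h : i = j
      · subst h; rfl
      · simp [Matrix.one_apply, h, Ne.symm h]
    | succ m ih =>
      intro i j
      have lhs_eq : d i * (P ^ (m + 1)) i j = ∑ l, d i * ((P ^ m) i l * P l j) := by
        rw [pow_succ, Matrix.mul_apply, Finset.mul_sum]
      have rhs_eq : d j * (P ^ (m + 1)) j i = ∑ l, d j * (P j l * (P ^ m) l i) := by
        rw [pow_succ', Matrix.mul_apply, Finset.mul_sum]
      rw [lhs_eq, rhs_eq]
      refine Finset.sum_congr rfl fun l _ => ?_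
      have h1 : d i * (P ^ m) i l = d l * (P ^ m) l i := ih i l
      have h2 : d l * P l j = (G.adjMatrix ℝ) l j := hrev1 l j
      have h3 : d j * P j l = (G.adjMatrix ℝ) j l := hrev1 j l
      have h4 : (G.adjMatrix ℝ) l j = (G.adjMatrix ℝ) j l := by
        simp [adjMatrix_apply, G.adj_comm]
      calc d i * ((P ^ m) i l * P l j) = (d i * (P ^ m) i l) * P l j := by ring
        _ = (d l * (P ^ m) l i) * P l j := by rw [h1]
        _ = (P ^ m) l i * (d l * P l j) := by ring
        _ = (P ^ m) l i * (G.adjMatrix ℝ) j l := by rw [h2, h4]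
        _ = (P ^ m) l i * (d j * P j l) := by rw [h3]
        _ = d j * (P j l * (P ^ m) l i) := by ring
  -- positivity from walks
  have hPk_pos : ∀ m, ∀ i j : Fin n, (∃ p : G.Walk i j, p.length = m) →
      0 < (P ^ m) i j := by
    intro m
    induction m with
    | zero =>
      rintro i j ⟨p, hp⟩
      cases p with
      | nil => rw [pow_zero, Matrix.one_apply_eq]; norm_num
      | cons h q => simp at hp
    | succ m ih =>
      rintro i j ⟨p, hp⟩
      cases p with
      | nil => simp at hp
      | @cons _ v _ h q =>
        have hq : q.length = m := by
          simp only [Walk.length_cons] at hp; omega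
        have h1 : 0 < P i v := by
          rw [hP]
          have : (G.adjMatrix ℝ) i v = 1 := by simp [adjMatrix_apply, h]
          rw [this]
          exact div_pos one_pos (hd i)
        have h2 : 0 < (P ^ m) v j := ih v j ⟨q, hq⟩
        rw [pow_succ', Matrix.mul_apply]
        have hle : P i v * (P ^ m) v j ≤ ∑ l, P i l * (P ^ m) l j :=
          Finset.single_le_sum (f := fun l => P i l * (P ^ m) l j)
            (fun l _ => mul_nonneg (hPnn i l) (hPk_nn m l j)) (Finset.mem_univ v)
        linarith [mul_pos h1 h2]
  -- extract the sum condition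
  have hn0 : (n : ℝ) ≠ 0 := by
    have : Nonempty (Fin n) := hconn.nonempty
    have : 0 < n := Fin.pos_iff_nonempty.mpr this
    exact_mod_cast this.ne'
  have hsum0 : ∑ i, ((∑ j, (P ^ k) i j * d j) - d i) = 0 := by
    rcases mul_eq_zero.mp hzero with h | h
    · exact absurd h (one_div_ne_zero hn0)
    · exact h
  have hsum : ∑ i, ∑ j, (P ^ k) i j * d j = ∑ i, d i := by
    rw [Finset.sum_sub_distrib] at hsum0
    linarith
  -- F i j = d i * (P^k) i j, symmetric and nonneg
  set F : Fin n → Fin n → ℝ := fun i j => d i * (P ^ k) i j with hF_def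
  have hFsymm : ∀ i j, F j i = F i j := fun i j => hrev k j i
  have hFnn : ∀ i j, 0 ≤ F i j := fun i j => mul_nonneg (hd i).le (hPk_nn k i j)
  have hT : ∑ i, ∑ j, F i j * (d j / d i - 1) = 0 := by
    have e : ∀ i j, F i j * (d j / d i - 1) = (P ^ k) i j * d j - F i j := by
      intro i j
      simp only [hF_def]
      have h1 := hdne i
      field_simp
    simp only [e]
    rw [Finset.sum_congr rfl fun i _ => Finset.sum_sub_distrib _ _,
      Finset.sum_sub_distrib, hsum]
    have e2 : ∀ i, ∑ j, F i j = d i := by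
      intro i
      simp only [hF_def]
      rw [← Finset.mul_sum, hPkrow k i, mul_one]
    rw [Finset.sum_congr rfl fun i _ => e2 i, sub_self]
  have hT' : ∑ i, ∑ j, F i j * (d i / d j - 1) = 0 := by
    calc ∑ i, ∑ j, F i j * (d i / d j - 1)
        = ∑ j, ∑ i, F i j * (d i / d j - 1) := Finset.sum_comm
      _ = ∑ i, ∑ j, F j i * (d j / d i - 1) := rfl
      _ = ∑ i, ∑ j, F i j * (d j / d i - 1) := by
          exact Finset.sum_congr rfl fun i _ => Finset.sum_congr rfl fun j _ => by
            rw [hFsymm i j]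
      _ = 0 := hT
  have hsum2 : ∑ i, ∑ j, F i j * ((d i - d j) ^ 2 / (d i * d j)) = 0 := by
    have e : ∀ i j, F i j * ((d i - d j) ^ 2 / (d i * d j)) =
        F i j * (d j / d i - 1) + F i j * (d i / d j - 1) := by
      intro i j
      have h1 := hdne i
      have h2 := hdne j
      field_simp
      ring
    simp only [e]
    rw [Finset.sum_congr rfl fun i _ => Finset.sum_add_distrib,
      Finset.sum_add_distrib, hT, hT', add_zero]
  have hterm_nn : ∀ i j, 0 ≤ F i j * ((d i - d j) ^ 2 / (d i * d j)) := by
    intro i j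
    have : 0 ≤ (d i - d j) ^ 2 / (d i * d j) :=
      div_nonneg (sq_nonneg _) (mul_nonneg (hd i).le (hd j).le)
    exact mul_nonneg (hFnn i j) this
  have hterm0 : ∀ i j, F i j * ((d i - d j) ^ 2 / (d i * d j)) = 0 := by
    intro i j
    have h1 := (Finset.sum_eq_zero_iff_of_nonneg
      (fun i _ => Finset.sum_nonneg fun j _ => hterm_nn i j)).mp hsum2 i (Finset.mem_univ i)
    exact (Finset.sum_eq_zero_iff_of_nonneg
      (fun j _ => hterm_nn i j)).mp h1 j (Finset.mem_univ j)
  -- key: a walk of length k forces equal degrees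
  have hkey : ∀ i j : Fin n, (∃ p : G.Walk i j, p.length = k) →
      G.degree i = G.degree j := by
    intro i j hw
    have hpos : 0 < (P ^ k) i j := hPk_pos k i j hw
    have hF : 0 < F i j := mul_pos (hd i) hpos
    have h0 := hterm0 i j
    have hsq : (d i - d j) ^ 2 / (d i * d j) = 0 := by
      rcases mul_eq_zero.mp h0 with h | h
      · exact absurd h hF.ne'
      · exact h
    have hsq2 : (d i - d j) ^ 2 = 0 := by
      rcases div_eq_zero_iff.mp hsq with h | h
      · exact h
      · exact absurd h (mul_ne_zero (hdne i) (hdne j))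
    have hdij : d i = d j := sub_eq_zero.mp (pow_eq_zero_iff two_ne_zero |>.mp hsq2)
    simp only [hd_def] at hdij
    exact_mod_cast hdij
  -- degrees equal across walks of length 2
  obtain ⟨k2, hk2⟩ := hk
  have hk2pos : 1 ≤ k2 := by omega
  have hstep2 : ∀ i x v : Fin n, G.Adj i v → G.Adj v x →
      G.degree i = G.degree x := by
    intro i x v h1 h2
    obtain ⟨p, hp⟩ := aux_backforth h1 (k2 - 1)
    refine hkey i x ⟨p.append (.cons h1 (.cons h2 .nil)), ?_⟩
    simp only [Walk.length_append, Walk.length_cons, Walk.length_nil, hp]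
    omega
  -- degrees equal across even walks
  have heven : ∀ m, ∀ (i j : Fin n) (p : G.Walk i j), p.length = 2 * m →
      G.degree i = G.degree j := by
    intro m
    induction m with
    | zero =>
      intro i j p hp
      cases p with
      | nil => rfl
      | cons h q => simp at hp
    | succ m ih =>
      intro i j p hp
      cases p with
      | nil => simp at hp
      | @cons _ v _ h q =>
        cases q with
        | nil => simp at hp; omega
        | @cons _ x _ h' q' =>
          have e1 : G.degree i = G.degree x := hstep2 i x v h h'
          have hq' : q'.length = 2 * m := by
            simp only [Walk.length_cons] at hp
            omega
          exact e1.trans (ih x j q' hq')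
  intro i j
  obtain ⟨p, hp⟩ := aux_even_walk hconn hnonbip i j
  obtain ⟨m, hm⟩ := hp
  exact heven m i j p (by omega)
end

section
/- Let G be a finite connected bipartite simple graph, and let k be even. The average k-level friendship bias for the simple random walk equals zero if and only if G is bi-regular, i.e., all vertices on the same side of the bipartition have the same degree. -/
open Finset

section aux

variable {n : ℕ} {G : SimpleGraph (Fin n)} [DecidableRel G.Adj]
  {P : Matrix (Fin n) (Fin n) ℝ}

private lemma walk_parity (side : Fin n → Bool) (hbip : ∀ i j, G.Adj i j → side i ≠ side j)
    {i j : Fin n} (p : G.Walk i j) : Even p.length ↔ side i = side j := by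
  induction p with
  | nil => simp
  | @cons u v w h q ih =>
    have hb := hbip _ _ h
    rw [SimpleGraph.Walk.length_cons, Nat.even_add_one, ih]
    revert hb
    cases hu : side u <;> cases hv : side v <;> cases hw : side w <;> simp

private lemma pad_walk {i x j : Fin n} (h1 : G.Adj i x) (h2 : G.Adj x j) :
    ∀ m : ℕ, ∃ p : G.Walk i j, p.length = 2 * m + 2
  | 0 => ⟨.cons h1 (.cons h2 .nil), by simp⟩
  | (m + 1) => by
    obtain ⟨p, hp⟩ := pad_walk h1 h2 m
    exact ⟨.cons h1 (.cons h1.symm p), by simp [hp]; ring⟩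

private lemma chain_deg
    (H : ∀ a b : Fin n, (∃ x, G.Adj a x ∧ G.Adj x b) → G.degree a = G.degree b) :
    ∀ m : ℕ, ∀ {i j : Fin n} (p : G.Walk i j), p.length = m → Even m →
      G.degree i = G.degree j := by
  intro m
  induction m using Nat.strong_induction_on with
  | _ m ih =>
    intro i j p hl he
    cases p with
    | nil => rfl
    | cons h q =>
      cases q with
      | nil =>
        rw [Nat.even_iff] at he
        simp [SimpleGraph.Walk.length_cons] at hl
        omega
      | cons h' q' =>
        simp only [SimpleGraph.Walk.length_cons] at hl
        have hstep := H _ _ ⟨_, h, h'⟩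
        have hlt : q'.length < m := by omega
        have heq : q'.length = q'.length := rfl
        have hev : Even q'.length := by
          rw [Nat.even_iff] at he ⊢; omega
        exact hstep.trans (ih q'.length hlt q' rfl hev)

private lemma adj_row_sum (i : Fin n) :
    ∑ j, (G.adjMatrix ℝ) i j = (G.degree i : ℝ) := by
  simp [SimpleGraph.adjMatrix_apply, Finset.sum_boole, SimpleGraph.degree,
    SimpleGraph.neighborFinset_eq_filter]

private lemma row_sum (hdeg : ∀ i, 1 ≤ G.degree i)
    (hP : ∀ i j, P i j = (G.adjMatrix ℝ) i j / (G.degree i : ℝ)) :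
    ∀ (k : ℕ) (i : Fin n), ∑ j, (P ^ k) i j = 1 := by
  have hd : ∀ i : Fin n, (0:ℝ) < (G.degree i : ℝ) := fun i => by
    exact_mod_cast hdeg i
  have h1 : ∀ i, ∑ j, P i j = 1 := by
    intro i
    simp only [hP]
    rw [← Finset.sum_div, adj_row_sum, div_self (hd i).ne']
  intro k
  induction k with
  | zero => intro i; simp [Matrix.one_apply]
  | succ k ihk =>
    intro i
    rw [pow_succ']
    simp only [Matrix.mul_apply]
    calc ∑ j, ∑ m, P i m * (P ^ k) m j
        = ∑ m, ∑ j, P i m * (P ^ k) m j := Finset.sum_comm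
      _ = ∑ m, P i m * ∑ j, (P ^ k) m j := by simp [Finset.mul_sum]
      _ = ∑ m, P i m := by simp [ihk]
      _ = 1 := h1 i

private lemma entry_nonneg
    (hP : ∀ i j, P i j = (G.adjMatrix ℝ) i j / (G.degree i : ℝ)) :
    ∀ (k : ℕ) (i j : Fin n), 0 ≤ (P ^ k) i j := by
  have hP0 : ∀ i j, 0 ≤ P i j := by
    intro i j
    rw [hP]
    apply div_nonneg
    · by_cases h : G.Adj i j <;> simp [SimpleGraph.adjMatrix_apply, h]
    · positivity
  intro k
  induction k with
  | zero => intro i j; rw [pow_zero, Matrix.one_apply]; split <;> norm_num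
  | succ k ihk =>
    intro i j
    rw [pow_succ', Matrix.mul_apply]
    exact Finset.sum_nonneg fun m _ => mul_nonneg (hP0 i m) (ihk m j)

private lemma reversible (hdeg : ∀ i, 1 ≤ G.degree i)
    (hP : ∀ i j, P i j = (G.adjMatrix ℝ) i j / (G.degree i : ℝ)) :
    ∀ (k : ℕ) (i j : Fin n),
      (G.degree i : ℝ) * (P ^ k) i j = (G.degree j : ℝ) * (P ^ k) j i := by
  have hd : ∀ i : Fin n, ((G.degree i : ℝ)) ≠ 0 := fun i => by
    have : (0:ℝ) < G.degree i := by exact_mod_cast hdeg i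
    exact this.ne'
  have hDP : ∀ i j, (G.degree i : ℝ) * P i j = (G.adjMatrix ℝ) i j := by
    intro i j; rw [hP, mul_comm, div_mul_cancel₀ _ (hd i)]
  have hAsymm : ∀ i j : Fin n, (G.adjMatrix ℝ) i j = (G.adjMatrix ℝ) j i := by
    intro i j; simp [SimpleGraph.adjMatrix_apply, G.adj_comm]
  intro k
  induction k with
  | zero =>
    intro i j
    by_cases h : i = j
    · subst h; rfl
    · simp [Matrix.one_apply, h, Ne.symm h]
  | succ k ihk =>
    intro i j
    conv_lhs => rw [pow_succ', Matrix.mul_apply]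
    conv_rhs => rw [pow_succ, Matrix.mul_apply]
    calc (G.degree i : ℝ) * ∑ m, P i m * (P ^ k) m j
        = ∑ m, ((G.degree i : ℝ) * P i m) * (P ^ k) m j := by
          rw [Finset.mul_sum]; exact Finset.sum_congr rfl fun m _ => by ring
      _ = ∑ m, ((G.degree m : ℝ) * P m i) * (P ^ k) m j := by
          refine Finset.sum_congr rfl fun m _ => ?_
          rw [hDP, hDP, hAsymm]
      _ = ∑ m, P m i * ((G.degree m : ℝ) * (P ^ k) m j) := by
          exact Finset.sum_congr rfl fun m _ => by ring
      _ = ∑ m, P m i * ((G.degree j : ℝ) * (P ^ k) j m) := by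
          exact Finset.sum_congr rfl fun m _ => by rw [ihk m j]
      _ = (G.degree j : ℝ) * ∑ m, (P ^ k) j m * P m i := by
          rw [Finset.mul_sum]; exact Finset.sum_congr rfl fun m _ => by ring

private lemma support_iff (hdeg : ∀ i, 1 ≤ G.degree i)
    (hP : ∀ i j, P i j = (G.adjMatrix ℝ) i j / (G.degree i : ℝ)) :
    ∀ (k : ℕ) (i j : Fin n),
      ((P ^ k) i j = 0 ↔ ((G.adjMatrix ℕ) ^ k) i j = 0) := by
  have hd : ∀ i : Fin n, ((G.degree i : ℝ)) ≠ 0 := fun i => by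
    have : (0:ℝ) < G.degree i := by exact_mod_cast hdeg i
    exact this.ne'
  have hP0 : ∀ i j, 0 ≤ P i j := by
    intro i j
    rw [hP]
    apply div_nonneg
    · by_cases h : G.Adj i j <;> simp [SimpleGraph.adjMatrix_apply, h]
    · positivity
  have hPz : ∀ i j, (P i j = 0 ↔ (G.adjMatrix ℕ) i j = 0) := by
    intro i j
    rw [hP, div_eq_zero_iff]
    by_cases h : G.Adj i j <;> simp [SimpleGraph.adjMatrix_apply, h, hd i]
  intro k
  induction k with
  | zero =>
    intro i j
    simp only [pow_zero, Matrix.one_apply]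
    split <;> simp
  | succ k ihk =>
    intro i j
    rw [pow_succ', pow_succ', Matrix.mul_apply, Matrix.mul_apply]
    rw [Finset.sum_eq_zero_iff_of_nonneg
      (fun m _ => mul_nonneg (hP0 i m) (entry_nonneg hP k m j)),
      Finset.sum_eq_zero_iff]
    constructor
    · intro h m hm
      have := h m hm
      rcases mul_eq_zero.mp this with h1 | h1
      · rw [mul_eq_zero]; exact Or.inl ((hPz i m).mp h1)
      · rw [mul_eq_zero]; exact Or.inr ((ihk m j).mp h1)
    · intro h m hm
      have := h m hm
      rcases mul_eq_zero.mp this with h1 | h1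
      · rw [mul_eq_zero]; exact Or.inl ((hPz i m).mpr h1)
      · rw [mul_eq_zero]; exact Or.inr ((ihk m j).mpr h1)

private lemma support_walk (hdeg : ∀ i, 1 ≤ G.degree i)
    (hP : ∀ i j, P i j = (G.adjMatrix ℝ) i j / (G.degree i : ℝ))
    (k : ℕ) (i j : Fin n) :
    (P ^ k) i j ≠ 0 ↔ ∃ p : G.Walk i j, p.length = k := by
  rw [Ne, support_iff hdeg hP k i j,
    SimpleGraph.adjMatrix_pow_apply_eq_card_walk]
  rw [Nat.cast_id, Fintype.card_eq_zero_iff, not_isEmpty_iff]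
  constructor
  · rintro ⟨⟨p, hp⟩⟩; exact ⟨p, hp⟩
  · rintro ⟨p, hp⟩; exact ⟨⟨p, hp⟩⟩

end aux

theorem stmt_6 (n : ℕ) (G : SimpleGraph (Fin n)) [DecidableRel G.Adj]
    (hconn : G.Connected) (hdeg : ∀ i, 1 ≤ G.degree i)
    (side : Fin n → Bool) (hbip : ∀ i j, G.Adj i j → side i ≠ side j)
    (k : ℕ) (hk : Even k) (hk1 : 1 ≤ k)
    (P : Matrix (Fin n) (Fin n) ℝ)
    (hP : ∀ i j, P i j = (G.adjMatrix ℝ) i j / (G.degree i : ℝ)) :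
    (1 / (n : ℝ)) * ∑ i, ((∑ j, (P ^ k) i j * (G.degree j : ℝ)) - (G.degree i : ℝ)) = 0
      ↔ ∀ i j, side i = side j → G.degree i = G.degree j := by
  classical
  have hd : ∀ i : Fin n, (0:ℝ) < (G.degree i : ℝ) := fun i => by exact_mod_cast hdeg i
  have hnpos : 0 < n := by
    have : Nonempty (Fin n) := hconn.nonempty
    exact Fin.pos_iff_nonempty.mpr this
  have hne : (1 / (n:ℝ)) ≠ 0 := by
    have : (n:ℝ) ≠ 0 := Nat.cast_ne_zero.mpr hnpos.ne'
    positivity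
  have hrow := row_sum hdeg hP
  have hnn := entry_nonneg hP
  have hrev := reversible hdeg hP
  have hsupp := support_walk hdeg hP
  -- rewrite the sum
  have hS : ∑ i, ((∑ j, (P ^ k) i j * (G.degree j : ℝ)) - (G.degree i : ℝ))
      = ∑ i, ∑ j, (P ^ k) i j * ((G.degree j : ℝ) - (G.degree i : ℝ)) := by
    refine Finset.sum_congr rfl fun i _ => ?_
    have h1 : (∑ j, (P ^ k) i j * (G.degree j : ℝ)) - (G.degree i : ℝ)
        = ∑ j, ((P ^ k) i j * (G.degree j : ℝ) - (P ^ k) i j * (G.degree i : ℝ)) := by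
      rw [Finset.sum_sub_distrib, ← Finset.sum_mul, hrow k i, one_mul]
    rw [h1]
    exact Finset.sum_congr rfl fun j _ => (mul_sub _ _ _).symm
  have hT2 : (∑ i, ∑ j, (P ^ k) i j * ((G.degree j : ℝ) - (G.degree i : ℝ)))
        + (∑ i, ∑ j, (P ^ k) i j * ((G.degree j : ℝ) - (G.degree i : ℝ)))
      = ∑ i, ∑ j, (P ^ k) i j * ((G.degree j : ℝ) - (G.degree i : ℝ))^2 / (G.degree j : ℝ) := by
    nth_rewrite 2 [show (∑ i, ∑ j, (P ^ k) i j * ((G.degree j : ℝ) - (G.degree i : ℝ)))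
          = ∑ i, ∑ j, (P ^ k) j i * ((G.degree i : ℝ) - (G.degree j : ℝ)) from Finset.sum_comm]
    rw [← Finset.sum_add_distrib]
    refine Finset.sum_congr rfl fun i _ => ?_
    rw [← Finset.sum_add_distrib]
    refine Finset.sum_congr rfl fun j _ => ?_
    have hr := hrev k i j
    rw [eq_div_iff (hd j).ne']
    linear_combination ((G.degree j : ℝ) - (G.degree i : ℝ)) * hr
  have hgnn : ∀ i j : Fin n,
      0 ≤ (P ^ k) i j * ((G.degree j : ℝ) - (G.degree i : ℝ))^2 / (G.degree j : ℝ) := by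
    intro i j
    apply div_nonneg (mul_nonneg (hnn k i j) (sq_nonneg _)) (hd j).le
  constructor
  · intro h0
    have hT0 : ∑ i, ∑ j, (P ^ k) i j * ((G.degree j : ℝ) - (G.degree i : ℝ)) = 0 := by
      rcases mul_eq_zero.mp h0 with h | h
      · exact absurd h hne
      · rw [hS] at h; exact h
    have hg0 : ∀ i j : Fin n,
        (P ^ k) i j * ((G.degree j : ℝ) - (G.degree i : ℝ))^2 / (G.degree j : ℝ) = 0 := by
      have hsum0 : ∑ i, ∑ j,
          (P ^ k) i j * ((G.degree j : ℝ) - (G.degree i : ℝ))^2 / (G.degree j : ℝ) = 0 := by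
        rw [← hT2, hT0, add_zero]
      intro i j
      have hrow0 := (Finset.sum_eq_zero_iff_of_nonneg
        (fun i _ => Finset.sum_nonneg fun j _ => hgnn i j)).mp hsum0 i (mem_univ i)
      exact (Finset.sum_eq_zero_iff_of_nonneg (fun j _ => hgnn i j)).mp hrow0 j (mem_univ j)
    have hkey : ∀ i j : Fin n, (P ^ k) i j ≠ 0 → G.degree i = G.degree j := by
      intro i j hz
      have := hg0 i j
      rw [div_eq_zero_iff] at this
      rcases this with h | h
      · rcases mul_eq_zero.mp h with h | h
        · exact absurd h hz
        · have : (G.degree j : ℝ) = (G.degree i : ℝ) := by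
            have := sq_eq_zero_iff.mp h
            linarith
          exact Nat.cast_inj.mp this.symm
      · exact absurd h (hd j).ne'
    have H2 : ∀ a b : Fin n, (∃ x, G.Adj a x ∧ G.Adj x b) → G.degree a = G.degree b := by
      rintro a b ⟨x, h1, h2⟩
      obtain ⟨t, ht⟩ := hk
      have ht1 : 1 ≤ t := by omega
      obtain ⟨p, hp⟩ := pad_walk h1 h2 (t - 1)
      have hpk : p.length = k := by omega
      exact hkey a b ((hsupp k a b).mpr ⟨p, hpk⟩)
    intro i j hside
    obtain ⟨p⟩ := hconn.preconnected i j
    have heven : Even p.length := (walk_parity side hbip p).mpr hside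
    exact chain_deg H2 p.length p rfl heven
  · intro hreg
    have hzero : ∀ i : Fin n, (∑ j, (P ^ k) i j * (G.degree j : ℝ)) - (G.degree i : ℝ) = 0 := by
      intro i
      have heq : ∑ j, (P ^ k) i j * (G.degree j : ℝ) = ∑ j, (P ^ k) i j * (G.degree i : ℝ) := by
        refine Finset.sum_congr rfl fun j _ => ?_
        by_cases hz : (P ^ k) i j = 0
        · simp [hz]
        · obtain ⟨p, hp⟩ := (hsupp k i j).mp hz
          have heven : Even p.length := hp ▸ hk
          have hside := (walk_parity side hbip p).mp heven
          rw [show (G.degree j : ℝ) = (G.degree i : ℝ) from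
            Nat.cast_inj.mpr (hreg j i hside.symm)]
      rw [heq, ← Finset.sum_mul, hrow k i, one_mul, sub_self]
    rw [Finset.sum_eq_zero fun i _ => hzero i, mul_zero]
end

section
/- Let G be a finite simple graph in which every connected component is bipartite and bi-regular. Then for every even k ∈ ℕ, the k-level friendship bias of every vertex under the simple random walk is zero: ∑_j P^k(i,j) d_j = d_i for all i. -/
set_option maxHeartbeats 800000


theorem stmt_16 (n : ℕ) (G : SimpleGraph (Fin n)) [DecidableRel G.Adj]
    (hdeg : ∀ i, 1 ≤ G.degree i)
    (side : Fin n → Bool) (hbip : ∀ i j, G.Adj i j → side i ≠ side j)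
    (hbireg : ∀ i j, G.Reachable i j → side i = side j → G.degree i = G.degree j)
    (P : Matrix (Fin n) (Fin n) ℝ)
    (hP : ∀ i j, P i j = (G.adjMatrix ℝ) i j / (G.degree i : ℝ)) :
    ∀ k : ℕ, Even k → ∀ i, ∑ j, (P ^ k) i j * (G.degree j : ℝ) = (G.degree i : ℝ) := by
  have hdpos : ∀ i, (0:ℝ) < (G.degree i : ℝ) := by
    intro i
    exact_mod_cast Nat.lt_of_lt_of_le Nat.zero_lt_one (hdeg i)
  have hrow1 : ∀ i, ∑ m, P i m = 1 := by
    intro i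
    have : ∑ m, P i m = (∑ m, (G.adjMatrix ℝ) i m) / (G.degree i : ℝ) := by
      rw [Finset.sum_div]
      exact Finset.sum_congr rfl fun m _ => hP i m
    rw [this]
    have hs : ∑ m, (G.adjMatrix ℝ) i m = (G.degree i : ℝ) := by
      simp [SimpleGraph.adjMatrix_apply, SimpleGraph.degree, SimpleGraph.neighborFinset,
        Finset.sum_boole]
    rw [hs]
    exact div_self (ne_of_gt (hdpos i))
  have hrow : ∀ k : ℕ, ∀ i, ∑ j, (P ^ k) i j = 1 := by
    intro k
    induction k with
    | zero => intro i; simp [Matrix.one_apply]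
    | succ k ih =>
      intro i
      rw [pow_succ']
      calc ∑ j, (P * P ^ k) i j = ∑ j, ∑ m, P i m * (P ^ k) m j := by
            simp [Matrix.mul_apply]
        _ = ∑ m, ∑ j, P i m * (P ^ k) m j := Finset.sum_comm
        _ = ∑ m, P i m * ∑ j, (P ^ k) m j := by
            simp [Finset.mul_sum]
        _ = ∑ m, P i m := by
            refine Finset.sum_congr rfl fun m _ => ?_
            rw [ih m, mul_one]
        _ = 1 := hrow1 i
  have hadj : ∀ i m, P i m ≠ 0 → G.Adj i m := by
    intro i m h
    rw [hP] at h
    by_contra hc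
    simp [SimpleGraph.adjMatrix_apply, hc] at h
  have key : ∀ k i j, (P ^ k) i j ≠ 0 → G.Reachable i j ∧ (Even k ↔ side i = side j) := by
    intro k
    induction k with
    | zero =>
      intro i j h
      rw [pow_zero, Matrix.one_apply] at h
      have : i = j := by by_contra hc; simp [hc] at h
      subst this
      exact ⟨SimpleGraph.Reachable.refl i, by simp⟩
    | succ k ih =>
      intro i j h
      rw [pow_succ', Matrix.mul_apply] at h
      obtain ⟨m, -, hm⟩ := Finset.exists_ne_zero_of_sum_ne_zero h
      have h1 : P i m ≠ 0 := fun hc => hm (by rw [hc, zero_mul])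
      have h2 : (P ^ k) m j ≠ 0 := fun hc => hm (by rw [hc, mul_zero])
      have hAdj := hadj i m h1
      obtain ⟨hr, hpar⟩ := ih m j h2
      refine ⟨(hAdj.reachable).trans hr, ?_⟩
      have hne := hbip i m hAdj
      rw [Nat.even_add_one]
      have hbool : (side i = side j) ↔ ¬ (side m = side j) := by
        revert hne; cases side i <;> cases side m <;> cases side j <;> decide
      constructor
      · intro hk
        exact hbool.mpr (fun hc => hk (hpar.mpr hc))
      · intro hij hk
        exact (hbool.mp hij) (hpar.mp hk)
  intro k hk i
  have : ∀ j, (P ^ k) i j * (G.degree j : ℝ) = (P ^ k) i j * (G.degree i : ℝ) := by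
    intro j
    by_cases h : (P ^ k) i j = 0
    · rw [h, zero_mul, zero_mul]
    · obtain ⟨hr, hpar⟩ := key k i j h
      rw [hbireg i j hr (hpar.mp hk)]
  calc ∑ j, (P ^ k) i j * (G.degree j : ℝ)
      = ∑ j, (P ^ k) i j * (G.degree i : ℝ) := Finset.sum_congr rfl fun j _ => this j
    _ = (∑ j, (P ^ k) i j) * (G.degree i : ℝ) := by rw [Finset.sum_mul]
    _ = (G.degree i : ℝ) := by rw [hrow k i, one_mul]
end
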